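/- arXiv:2106.11115 — 11 statements merged into one kernel-verified Lean document; each statement's English description precedes it below -/
import Mathlib

section
/- The category TopCat of topological spaces is strongly compact: every functor F : TopCat ⥤ C into any locally small category C that preserves all small colimits has a right adjoint. -/
/-!
STATEMENT 3: The category of topological spaces is strongly compact: every functor
`TopCat ⥤ C` into a locally small category preserving all small colimits has a right
adjoint.
-/

open CategoryTheory CategoryTheory.Limits

universe w u

namespace Stmt3Aux

/-- The one-point space separates `TopCat`. -/
lemma isSeparating_punit : ObjectProperty.IsSeparating ({TopCat.of PUnit.{u+1}} : Set TopCat.{u}) := by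
  intro X Y f g h
  ext x
  have := h (TopCat.of PUnit) (Set.mem_singleton _)
    (TopCat.ofHom ⟨fun _ => x, continuous_const⟩ : TopCat.of PUnit.{u+1} ⟶ X)
  exact congrFun (congrArg (fun f => f.hom.toFun) this) PUnit.unit

/-- `TopCat` is well-copowered. -/
instance : WellPowered.{u} TopCat.{u}ᵒᵖ := by
  constructor
  intro X
  let T : Type u := Σ s : Setoid X.unop,
    { t : TopologicalSpace (_root_.Quotient s) // @Continuous _ _ X.unop.str t (_root_.Quotient.mk s) }
  let q : ∀ d : T, X.unop ⟶ (@TopCat.of (_root_.Quotient d.1) d.2.1 : TopCat.{u}) := fun d =>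
    @TopCat.ofHom _ _ X.unop.str d.2.1 (@ContinuousMap.mk _ _ X.unop.str d.2.1 (_root_.Quotient.mk d.1) d.2.2)
  have hepi : ∀ d : T, Epi (q d) := fun d =>
    (TopCat.epi_iff_surjective _).mpr (fun y => Quotient.exists_rep y)
  have hmono : ∀ d : T, Mono (q d).op := fun d =>
    haveI := hepi d; inferInstance
  let φ : T → Subobject X := fun d =>
    haveI := hmono d
    Subobject.mk ((q d).op : _ ⟶ Opposite.op X.unop)
  refine small_of_surjective (f := φ) ?_
  refine Subobject.ind _ ?_
  intro A g hg
  haveI : Epi g.unop := inferInstance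
  have hs : Function.Surjective g.unop := (TopCat.epi_iff_surjective _).mp ‹_›
  let s : Setoid X.unop := Setoid.ker g.unop
  let β : _root_.Quotient s ≃ A.unop := Setoid.quotientKerEquivOfSurjective _ hs
  have hβ : ∀ x : X.unop, β (_root_.Quotient.mk s x) = g.unop x := fun x => rfl
  let t : TopologicalSpace (_root_.Quotient s) := TopologicalSpace.induced β A.unop.str
  have hcont : @Continuous _ _ X.unop.str t (_root_.Quotient.mk s) := by
    rw [continuous_induced_rng]
    exact (show Continuous (fun x : X.unop => g.unop x) from g.unop.hom.continuous)
  let d : T := ⟨s, t, hcont⟩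
  refine ⟨d, ?_⟩
  -- the homeomorphism between the constructed quotient and `A.unop`
  let h : (@TopCat.of (_root_.Quotient d.1) d.2.1 : TopCat.{u}) ≃ₜ A.unop :=
    @Equiv.toHomeomorphOfIsInducing _ _ d.2.1 _ β ⟨rfl⟩
  let j : A.unop ≅ (@TopCat.of (_root_.Quotient d.1) d.2.1 : TopCat.{u}) := TopCat.isoOfHomeo h.symm
  haveI := hmono d
  refine Subobject.mk_eq_mk_of_comm _ _ j.op ?_
  have : g.unop ≫ j.hom = q d := by
    ext x
    change β.symm (g.unop x) = _root_.Quotient.mk s x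
    rw [← hβ x]
    exact β.symm_apply_apply _
  exact Quiver.Hom.unop_inj this

end Stmt3Aux

theorem stmt3 {C : Type w} [Category.{u} C] (F : TopCat.{u} ⥤ C)
    [PreservesColimitsOfSize.{u, u} F] :
    F.IsLeftAdjoint := by
  have : Small.{u} ({TopCat.of PUnit.{u+1}} : Set TopCat.{u}) := small_subsingleton _
  haveI : ObjectProperty.Small.{u} (({TopCat.of PUnit.{u+1}} : Set TopCat.{u}) : ObjectProperty TopCat.{u}) := this
  exact isLeftAdjoint_of_preservesColimits_of_isSeparating (P := ({TopCat.of PUnit.{u+1}} : Set TopCat.{u})) Stmt3Aux.isSeparating_punit F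
end

section
/- The opposite of the category of groups is not strongly compact: there exists a functor F : Grp ⥤ Type u that preserves all small limits but is not corepresentable, i.e., F is not naturally isomorphic to Hom(G, −) for any group G. -/
/-!
STATEMENT 4: `Grpᵒᵖ` is not strongly compact: there is a functor `Grp ⥤ Type u`
preserving all small limits which is not corepresentable.
-/

open CategoryTheory CategoryTheory.Limits

universe u

namespace Stmt4

open Equiv Equiv.Perm

variable {α : Type u} [DecidableEq α]

/-- The 3-cycle `(a b c)`. -/
def cyc (a b c : α) : Perm α := swap a b * swap b c

theorem cyc_apply_left {a b c : α} (hab : a ≠ b) (hac : a ≠ c) : cyc a b c a = b := by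
  simp [cyc, Perm.mul_apply, swap_apply_of_ne_of_ne hab hac]

theorem cyc_apply_mid {a b c : α} (hac : a ≠ c) (hbc : b ≠ c) : cyc a b c b = c := by
  simp [cyc, Perm.mul_apply, swap_apply_of_ne_of_ne (Ne.symm hac) (Ne.symm hbc)]

theorem cyc_apply_right {a b c : α} : cyc a b c c = a := by
  simp [cyc, Perm.mul_apply]

theorem cyc_apply_of_ne {a b c x : α} (hxa : x ≠ a) (hxb : x ≠ b) (hxc : x ≠ c) :
    cyc a b c x = x := by
  simp [cyc, Perm.mul_apply, swap_apply_of_ne_of_ne hxb hxc,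
    swap_apply_of_ne_of_ne hxa hxb]

theorem cyc_conj (π : Perm α) (a b c : α) :
    π * cyc a b c * π⁻¹ = cyc (π a) (π b) (π c) := by
  simp only [cyc, swap_apply_apply]
  group

theorem cyc_inv {a b c : α} (hab : a ≠ b) (hac : a ≠ c) (hbc : b ≠ c) :
    (cyc a b c)⁻¹ = cyc a c b := by
  refine inv_eq_of_mul_eq_one_left ?_
  ext z
  rcases eq_or_ne z a with rfl | hza
  · rw [Perm.mul_apply, cyc_apply_left hab hac, cyc_apply_right, Perm.one_apply]
  · rcases eq_or_ne z b with rfl | hzb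
    · rw [Perm.mul_apply, cyc_apply_mid hac hbc, cyc_apply_mid hab hbc.symm, Perm.one_apply]
    · rcases eq_or_ne z c with rfl | hzc
      · rw [Perm.mul_apply, cyc_apply_right, cyc_apply_left hac hab, Perm.one_apply]
      · rw [Perm.mul_apply, cyc_apply_of_ne hza hzb hzc, cyc_apply_of_ne hza hzc hzb,
          Perm.one_apply]

theorem cyc_mul_cyc_inv {a b x y : α} (hab : a ≠ b) (hax : a ≠ x) (hbx : b ≠ x)
    (hay : a ≠ y) (hby : b ≠ y) (hxy : x ≠ y) :
    cyc a b x * (cyc a b y)⁻¹ = cyc a y x := by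
  rw [mul_inv_eq_iff_eq_mul]
  ext z
  rcases eq_or_ne z a with rfl | hza
  · rw [Perm.mul_apply, cyc_apply_left hab hay,
      cyc_apply_of_ne (Ne.symm hab) hby hbx, cyc_apply_left hab hax]
  · rcases eq_or_ne z b with rfl | hzb
    · rw [Perm.mul_apply, cyc_apply_mid hay hby, cyc_apply_mid hax hxy.symm,
        cyc_apply_mid hax hbx]
    · rcases eq_or_ne z y with rfl | hzy
      · rw [Perm.mul_apply, cyc_apply_right, cyc_apply_left hay hax,
          cyc_apply_of_ne (Ne.symm hay) (Ne.symm hby) hxy.symm]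
      · rcases eq_or_ne z x with rfl | hzx
        · rw [Perm.mul_apply, cyc_apply_of_ne hax.symm hbx.symm hxy, cyc_apply_right,
            cyc_apply_right]
        · rw [Perm.mul_apply, cyc_apply_of_ne hza hzb hzy, cyc_apply_of_ne hza hzy hzx,
            cyc_apply_of_ne hza hzb hzx]

/-- Predicate: `σ` is a 3-cycle of the explicit form. -/
def IsTC (σ : Perm α) : Prop := ∃ a b c : α, a ≠ b ∧ a ≠ c ∧ b ≠ c ∧ σ = cyc a b c

/-- The subgroup of `Perm α` generated by all 3-cycles. -/
def G3 (α : Type u) [DecidableEq α] : Subgroup (Perm α) :=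
  Subgroup.closure {σ | IsTC σ}

theorem cyc_mem {a b c : α} (hab : a ≠ b) (hac : a ≠ c) (hbc : b ≠ c) :
    cyc a b c ∈ G3 α :=
  Subgroup.subset_closure ⟨a, b, c, hab, hac, hbc, rfl⟩

/-- The 3-cycle `(a b c)` as an element of `G3 α`. -/
def el {a b c : α} (hab : a ≠ b) (hac : a ≠ c) (hbc : b ≠ c) : ↥(G3 α) :=
  ⟨cyc a b c, cyc_mem hab hac hbc⟩

section Hom

variable {G : Type u} [Group G] (f : ↥(G3 α) →* G)

/-- `f` kills the 3-cycle `(a b c)`. -/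
def killed (a b c : α) : Prop := ∀ h : cyc a b c ∈ G3 α, f ⟨cyc a b c, h⟩ = 1

variable {f}

/-- If `f` kills all 3-cycles, it is trivial. -/
theorem eq_one_of_forall_cyc (hf : ∀ a b c : α, a ≠ b → a ≠ c → b ≠ c → killed f a b c)
    (x : ↥(G3 α)) : f x = 1 := by
  obtain ⟨x, hx⟩ := x
  induction hx using Subgroup.closure_induction with
  | mem σ hσ =>
    obtain ⟨a, b, c, hab, hac, hbc, rfl⟩ := hσ
    exact hf a b c hab hac hbc _
  | one => exact map_one f
  | mul g h hg hh ihg ihh =>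
    have : (⟨g * h, mul_mem hg hh⟩ : ↥(G3 α)) = ⟨g, hg⟩ * ⟨h, hh⟩ := rfl
    rw [this, map_mul, ihg, ihh, one_mul]
  | inv g hg ih =>
    have : (⟨g⁻¹, inv_mem hg⟩ : ↥(G3 α)) = (⟨g, hg⟩ : ↥(G3 α))⁻¹ := rfl
    rw [this, map_inv, ih, inv_one]

/-- Conjugation propagation. -/
theorem killed.conj {a b c : α} (h : killed f a b c)
    {π : Perm α} (hπ : π ∈ G3 α) (hm : cyc a b c ∈ G3 α) :
    killed f (π a) (π b) (π c) := by
  intro h'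
  have key : (⟨cyc (π a) (π b) (π c), h'⟩ : ↥(G3 α)) =
      ⟨π, hπ⟩ * ⟨cyc a b c, hm⟩ * (⟨π, hπ⟩ : ↥(G3 α))⁻¹ := by
    apply Subtype.ext
    simp only [Subgroup.coe_mul, InvMemClass.coe_inv]
    exact (cyc_conj π a b c).symm
  rw [key, map_mul, map_mul, map_inv, h hm, mul_one, mul_inv_cancel]

variable [Infinite α]

private theorem fresh (s : Finset α) : ∃ w, ∀ x ∈ s, w ≠ x := by
  obtain ⟨w, hw⟩ := Infinite.exists_notMem_finset s
  exact ⟨w, fun x hx e => hw (e ▸ hx)⟩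

/-- Replace the third letter. -/
theorem killed.replace3 {a b c d : α} (h : killed f a b c) (hab : a ≠ b) (hac : a ≠ c)
    (hbc : b ≠ c) (had : a ≠ d) (hbd : b ≠ d) : killed f a b d := by
  rcases eq_or_ne c d with rfl | hcd
  · exact h
  obtain ⟨w, hw⟩ := fresh {a, b, c, d}
  have hwa := hw a (by simp); have hwb := hw b (by simp)
  have hwc := hw c (by simp); have hwd := hw d (by simp)
  have hm : cyc c d w ∈ G3 α := cyc_mem hcd (Ne.symm hwc) (Ne.symm hwd)
  have := h.conj hm (cyc_mem hab hac hbc)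
  rw [cyc_apply_of_ne hac had (Ne.symm hwa),
    cyc_apply_of_ne hbc hbd (Ne.symm hwb),
    cyc_apply_left hcd (Ne.symm hwc)] at this
  exact this

/-- Replace the second letter. -/
theorem killed.replace2 {a b c d : α} (h : killed f a b c) (hab : a ≠ b) (hac : a ≠ c)
    (hbc : b ≠ c) (had : a ≠ d) (hdc : d ≠ c) : killed f a d c := by
  rcases eq_or_ne b d with rfl | hbd
  · exact h
  obtain ⟨w, hw⟩ := fresh {a, b, c, d}
  have hwa := hw a (by simp); have hwb := hw b (by simp)
  have hwc := hw c (by simp); have hwd := hw d (by simp)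
  have hm : cyc b d w ∈ G3 α := cyc_mem hbd (Ne.symm hwb) (Ne.symm hwd)
  have := h.conj hm (cyc_mem hab hac hbc)
  rw [cyc_apply_of_ne hab had (Ne.symm hwa),
    cyc_apply_of_ne hbc.symm (Ne.symm hdc) (Ne.symm hwc),
    cyc_apply_left hbd (Ne.symm hwb)] at this
  exact this

/-- Replace the first letter. -/
theorem killed.replace1 {a b c d : α} (h : killed f a b c) (hab : a ≠ b) (hac : a ≠ c)
    (hbc : b ≠ c) (hdb : d ≠ b) (hdc : d ≠ c) : killed f d b c := by
  rcases eq_or_ne a d with rfl | had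
  · exact h
  obtain ⟨w, hw⟩ := fresh {a, b, c, d}
  have hwa := hw a (by simp); have hwb := hw b (by simp)
  have hwc := hw c (by simp); have hwd := hw d (by simp)
  have hm : cyc a d w ∈ G3 α := cyc_mem had (Ne.symm hwa) (Ne.symm hwd)
  have := h.conj hm (cyc_mem hab hac hbc)
  rw [cyc_apply_of_ne hab.symm (Ne.symm hdb) (Ne.symm hwb),
    cyc_apply_of_ne hac.symm (Ne.symm hdc) (Ne.symm hwc),
    cyc_apply_left had (Ne.symm hwa)] at this
  exact this

/-- If `f` kills one 3-cycle, it kills every 3-cycle. -/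
theorem killed.any {a b c : α} (h : killed f a b c) (hab : a ≠ b) (hac : a ≠ c) (hbc : b ≠ c)
    {a' b' c' : α} (hab' : a' ≠ b') (hac' : a' ≠ c') (hbc' : b' ≠ c') :
    killed f a' b' c' := by
  obtain ⟨p, hp⟩ := fresh {a, b, c, a', b', c'}
  obtain ⟨q, hq⟩ := fresh {a, b, c, a', b', c', p}
  obtain ⟨r, hr⟩ := fresh {a, b, c, a', b', c', p, q}
  have hpa := hp a (by simp); have hpb := hp b (by simp); have hpc := hp c (by simp)
  have hpa' := hp a' (by simp); have hpb' := hp b' (by simp); have hpc' := hp c' (by simp)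
  have hqa := hq a (by simp); have hqb := hq b (by simp); have hqc := hq c (by simp)
  have hqa' := hq a' (by simp); have hqb' := hq b' (by simp); have hqc' := hq c' (by simp)
  have hqp := hq p (by simp)
  have hra := hr a (by simp); have hrb := hr b (by simp); have hrc := hr c (by simp)
  have hra' := hr a' (by simp); have hrb' := hr b' (by simp); have hrc' := hr c' (by simp)
  have hrp := hr p (by simp); have hrq := hr q (by simp)
  have h1 : killed f a b r := h.replace3 hab hac hbc (Ne.symm hra) (Ne.symm hrb)
  have h2 : killed f a q r := h1.replace2 hab (Ne.symm hra) (Ne.symm hrb) (Ne.symm hqa) (Ne.symm hrq)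
  have h3 : killed f p q r := h2.replace1 (Ne.symm hqa) (Ne.symm hra) (Ne.symm hrq) (Ne.symm hqp) (Ne.symm hrp)
  have h4 : killed f a' q r := h3.replace1 (Ne.symm hqp) (Ne.symm hrp) (Ne.symm hrq) (Ne.symm hqa') (Ne.symm hra')
  have h5 : killed f a' b' r := h4.replace2 (Ne.symm hqa') (Ne.symm hra') (Ne.symm hrq) hab' (Ne.symm hrb')
  exact h5.replace3 hab' (Ne.symm hra') (Ne.symm hrb') hac' hbc'

/-- Main triviality theorem: any homomorphism from `G3 α` to a group of
cardinality less than `#α` is trivial. -/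
theorem hom_trivial (hG : Cardinal.mk G < Cardinal.mk α) (x : ↥(G3 α)) : f x = 1 := by
  by_contra hx
  -- some 3-cycle survives
  have hsome : ∃ (a b c : α), a ≠ b ∧ a ≠ c ∧ b ≠ c ∧ ¬ killed f a b c := by
    by_contra hno
    push_neg at hno
    exact hx (eq_one_of_forall_cyc hno x)
  obtain ⟨a₀, b₀, c₀, h₀1, h₀2, h₀3, hsurv⟩ := hsome
  -- hence every 3-cycle survives
  have hall : ∀ a b c : α, a ≠ b → a ≠ c → b ≠ c →
      ∀ h : cyc a b c ∈ G3 α, f ⟨cyc a b c, h⟩ ≠ 1 := by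
    intro a b c h1 h2 h3 h he
    exact hsurv (killed.any (fun _ => he) h1 h2 h3 h₀1 h₀2 h₀3)
  obtain ⟨a, b, hab⟩ := exists_pair_ne α
  -- injection from the complement of {a, b} into G
  have hmem : ∀ x : ↥({a, b}ᶜ : Set α), a ≠ (x : α) ∧ b ≠ (x : α) := by
    rintro ⟨x, hx⟩
    simp only [Set.mem_compl_iff, Set.mem_insert_iff, Set.mem_singleton_iff, not_or] at hx
    exact ⟨Ne.symm hx.1, Ne.symm hx.2⟩
  set φ : ↥({a, b}ᶜ : Set α) → G :=
    fun x => f ⟨cyc a b x, cyc_mem hab (hmem x).1 (hmem x).2⟩ with hφ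
  have hinj : Function.Injective φ := by
    intro x y hxy
    by_contra hne
    have hxy' : (x : α) ≠ (y : α) := fun e => hne (Subtype.ext e)
    have hxy2 : f ⟨cyc a b (x : α), cyc_mem hab (hmem x).1 (hmem x).2⟩ =
        f ⟨cyc a b (y : α), cyc_mem hab (hmem y).1 (hmem y).2⟩ := hxy
    have : f (⟨cyc a b x, cyc_mem hab (hmem x).1 (hmem x).2⟩ *
        (⟨cyc a b y, cyc_mem hab (hmem y).1 (hmem y).2⟩ : ↥(G3 α))⁻¹) = 1 := by
      rw [map_mul, map_inv, hxy2, mul_inv_cancel]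
    have key : (⟨cyc a b x, cyc_mem hab (hmem x).1 (hmem x).2⟩ *
        (⟨cyc a b y, cyc_mem hab (hmem y).1 (hmem y).2⟩ : ↥(G3 α))⁻¹) =
        ⟨cyc a (y : α) (x : α), cyc_mem (hmem y).1 (hmem x).1 (Ne.symm hxy')⟩ := by
      apply Subtype.ext
      simp only [Subgroup.coe_mul, InvMemClass.coe_inv]
      exact cyc_mul_cyc_inv hab (hmem x).1 (hmem x).2 (hmem y).1 (hmem y).2 hxy'
    rw [key] at this
    exact hall a y x (hmem y).1 (hmem x).1 (Ne.symm hxy') _ this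
  have hcompl : Cardinal.mk ↥({a, b}ᶜ : Set α) = Cardinal.mk α := by
    apply Cardinal.mk_compl_of_infinite
    haveI : Finite ↥({a, b} : Set α) := Set.Finite.to_subtype
      ((Set.finite_singleton b).insert a)
    exact lt_of_lt_of_le (Cardinal.lt_aleph0_of_finite _) (Cardinal.aleph0_le_mk α)
  have := Cardinal.mk_le_of_injective hinj
  rw [hcompl] at this
  exact absurd (lt_of_le_of_lt this hG) (lt_irrefl _)

end Hom

/-- `G3 α` has at least `#α` elements. -/
theorem mk_le_G3 [Infinite α] : Cardinal.mk α ≤ Cardinal.mk ↥(G3 α) := by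
  obtain ⟨a, b, hab⟩ := exists_pair_ne α
  have hmem : ∀ x : ↥({a, b}ᶜ : Set α), a ≠ (x : α) ∧ b ≠ (x : α) := by
    rintro ⟨x, hx⟩
    simp only [Set.mem_compl_iff, Set.mem_insert_iff, Set.mem_singleton_iff, not_or] at hx
    exact ⟨Ne.symm hx.1, Ne.symm hx.2⟩
  have hinj : Function.Injective
      (fun x : ↥({a, b}ᶜ : Set α) =>
        (⟨cyc a b x, cyc_mem hab (hmem x).1 (hmem x).2⟩ : ↥(G3 α))) := by
    intro x y hxy
    have h1 : cyc a b (x : α) = cyc a b (y : α) := congrArg Subtype.val hxy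
    have h2 : cyc a b (x : α) b = cyc a b (y : α) b := by rw [h1]
    rw [cyc_apply_mid (hmem x).1 (hmem x).2, cyc_apply_mid (hmem y).1 (hmem y).2] at h2
    exact Subtype.ext h2
  have hcompl : Cardinal.mk ↥({a, b}ᶜ : Set α) = Cardinal.mk α := by
    apply Cardinal.mk_compl_of_infinite
    haveI : Finite ↥({a, b} : Set α) := Set.Finite.to_subtype
      ((Set.finite_singleton b).insert a)
    exact lt_of_lt_of_le (Cardinal.lt_aleph0_of_finite _) (Cardinal.aleph0_le_mk α)
  calc Cardinal.mk α = _ := hcompl.symm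
    _ ≤ _ := Cardinal.mk_le_of_injective hinj

/-! ### The functor -/

open CategoryTheory CategoryTheory.Limits Opposite

/-- An infinite type of cardinality at least `c`. -/
def Om (c : Cardinal.{u}) : Type u := c.out ⊕ ULift.{u} ℕ

instance (c : Cardinal.{u}) : Infinite (Om c) := by
  unfold Om; infer_instance

noncomputable instance (c : Cardinal.{u}) : DecidableEq (Om c) := Classical.decEq _

/-- The group `G3 (Om c)` as an object of `Grp`. -/
noncomputable def SG (c : Cardinal.{u}) : GrpCat.{u} := GrpCat.of ↥(G3 (Om c))

theorem le_mk_Om (c : Cardinal.{u}) : c ≤ Cardinal.mk (Om c) :=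
  calc c = Cardinal.mk c.out := (Cardinal.mk_out c).symm
    _ ≤ Cardinal.mk (Om c) := Cardinal.mk_le_of_injective Sum.inl_injective

theorem le_mk_SG (c : Cardinal.{u}) : c ≤ Cardinal.mk (SG c : Type u) :=
  (le_mk_Om c).trans mk_le_G3

/-- Homs out of the big groups into small groups are trivial. -/
theorem SG_hom_trivial {c : Cardinal.{u}} {G : GrpCat.{u}}
    (h : Cardinal.mk (G : Type u) < c) (f : SG c ⟶ G) (x : SG c) : f x = 1 :=
  hom_trivial (f := f.hom) (h.trans_le (le_mk_Om c)) x

theorem SG_hom_eq {c : Cardinal.{u}} {G : GrpCat.{u}}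
    (h : Cardinal.mk (G : Type u) < c) (f g : SG c ⟶ G) : f = g := by
  ext x
  rw [SG_hom_trivial h f x, SG_hom_trivial h g x]

/-- The (big) product of the corepresentable functors of all the `SG c`. -/
def P (G : GrpCat.{u}) : Type (u + 1) := ∀ c : Cardinal.{u}, (SG c ⟶ G)

instance small_P (G : GrpCat.{u}) : Small.{u} (P G) := by
  set κ := Cardinal.mk (G : Type u) with hκ
  have hr : Function.Injective
      (fun (p : P G) (c : Set.Iic κ) => p c.1) := by
    intro p q h
    funext c
    by_cases hc : c ≤ κ
    · exact congrFun h ⟨c, hc⟩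
    · exact SG_hom_eq (not_le.mp hc) (p c) (q c)
  exact small_of_injective hr

/-- The limit-preserving non-corepresentable functor. -/
noncomputable def F : GrpCat.{u} ⥤ Type u where
  obj G := Shrink.{u} (P G)
  map {G H} φ := TypeCat.ofHom fun x => equivShrink (P H) (fun c => (equivShrink (P G)).symm x c ≫ φ)
  map_id G := by
    refine ConcreteCategory.hom_ext _ _ fun x => ?_
    simp only [TypeCat.Fun.toFun_apply, TypeCat.ofHom_apply, Category.comp_id, types_id_apply]
    exact Equiv.apply_symm_apply _ x
  map_comp {G H I} φ ψ := by
    refine ConcreteCategory.hom_ext _ _ fun x => ?_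
    simp only [TypeCat.Fun.toFun_apply, TypeCat.ofHom_apply, types_comp_apply]
    apply congrArg
    funext c
    erw [Equiv.symm_apply_apply, Category.assoc]

@[simp] theorem F_obj (G : GrpCat.{u}) : F.obj G = Shrink.{u} (P G) := rfl

@[simp] theorem F_map_apply {G H : GrpCat.{u}} (φ : G ⟶ H) (x : F.obj G) :
    F.map φ x = equivShrink (P H) (fun c => (equivShrink (P G)).symm x c ≫ φ) := rfl

noncomputable instance F_preserves : PreservesLimitsOfSize.{u, u} F.{u} where
  preservesLimitsOfShape {J} _ :=
    { preservesLimit := fun {K} =>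
      { preserves := fun {cn} hcn => by
          rw [Types.isLimit_iff]
          intro s hs
          set t : ∀ j, P (K.obj j) :=
            fun j => (equivShrink (P (K.obj j))).symm (s j) with htdef
          have ht : ∀ {i j : J} (φ : i ⟶ j) (d : Cardinal.{u}),
              t i d ≫ K.map φ = t j d := by
            intro i j φ d
            have h2 : F.map (K.map φ) (s i) = s j := hs φ
            rw [F_map_apply] at h2
            have h4 := congrArg (equivShrink (P (K.obj j))).symm h2
            erw [Equiv.symm_apply_apply] at h4
            exact congrFun h4 d
          let cone : ∀ d : Cardinal.{u}, Cone K := fun d =>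
            { pt := SG d
              π :=
                { app := fun j => t j d
                  naturality := fun i j φ => by
                    simp only [Functor.const_obj_obj, Functor.const_obj_map,
                      Category.id_comp]
                    exact (ht φ d).symm } }
          refine ⟨equivShrink (P cn.pt) (fun d => hcn.lift (cone d)),
            fun j => ?_, fun x hx => ?_⟩
          · show F.map (cn.π.app j) _ = s j
            erw [F_map_apply]
            simp only [Functor.const_obj_obj]
            have h5 : (fun d => (equivShrink (P cn.pt)).symm
                (equivShrink (P cn.pt) (fun d => hcn.lift (cone d))) d ≫ cn.π.app j)
                = t j := by
              funext d
              erw [Equiv.symm_apply_apply]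
              exact hcn.fac (cone d) j
            rw [h5]
            exact Equiv.apply_symm_apply _ _
          · apply (equivShrink (P cn.pt)).symm.injective
            erw [Equiv.symm_apply_apply]
            funext d
            refine hcn.uniq (cone d) _ (fun j => ?_)
            have h5 : F.map (cn.π.app j) x = s j := hx j
            rw [F_map_apply] at h5
            have h6 := congrArg (equivShrink (P (K.obj j))).symm h5
            erw [Equiv.symm_apply_apply] at h6
            exact congrFun h6 d } }

/-- The trivial morphism in `Grp`. -/
noncomputable def trivHom (A B : GrpCat.{u}) : A ⟶ B := GrpCat.ofHom (1 : A →* B)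

theorem trivHom_comp {A B C : GrpCat.{u}} (g : B ⟶ C) : trivHom A B ≫ g = trivHom A C := by
  ext x
  show g ((1 : A →* B) x) = (1 : A →* C) x
  simp only [MonoidHom.one_apply, map_one]

/-- The inclusion of the `κ`-th factor. -/
noncomputable def incl (κ : Cardinal.{u}) : coyoneda.obj (op (SG κ)) ⟶ F where
  app X := TypeCat.ofHom fun f => equivShrink (P X)
    (fun d => if h : d = κ then (eqToHom (congrArg SG h) ≫ f) else trivHom _ _)
  naturality X Y g := by
    ext f
    simp only [TypeCat.Fun.toFun_apply, TypeCat.ofHom_apply, Functor.flip_obj_map,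
      yoneda_map_app, unop_op, types_comp_apply]
    rw [F_map_apply]
    erw [TypeCat.ofHom_apply, TypeCat.ofHom_apply]
    apply congrArg
    funext d
    erw [Equiv.symm_apply_apply]
    by_cases h : d = κ
    · rw [dif_pos h, dif_pos h, Category.assoc]
    · rw [dif_neg h, dif_neg h, trivHom_comp]

/-- The projection onto the `κ`-th factor. -/
noncomputable def proj (κ : Cardinal.{u}) : F ⟶ coyoneda.obj (op (SG κ)) where
  app X := TypeCat.ofHom fun x => (equivShrink (P X)).symm x κ
  naturality X Y g := by
    ext x
    simp only [TypeCat.Fun.toFun_apply, TypeCat.ofHom_apply, Functor.flip_obj_map,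
      yoneda_map_app, unop_op, types_comp_apply, F_map_apply, Equiv.symm_apply_apply]
    erw [TypeCat.ofHom_apply, Equiv.symm_apply_apply]

@[simp] theorem incl_app (κ : Cardinal.{u}) (X : GrpCat.{u}) (f : SG κ ⟶ X) :
    (incl κ).app X f = equivShrink (P X)
      (fun d => if h : d = κ then (eqToHom (congrArg SG h) ≫ f) else trivHom _ _) := rfl

@[simp] theorem proj_app (κ : Cardinal.{u}) (X : GrpCat.{u}) (x : F.obj X) :
    (proj κ).app X x = (equivShrink (P X)).symm x κ := rfl

theorem incl_proj (κ : Cardinal.{u}) : incl κ ≫ proj κ = 𝟙 _ := by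
  ext X f
  simp only [TypeCat.Fun.toFun_apply, NatTrans.comp_app, types_comp_apply, incl_app, proj_app,
    Equiv.symm_apply_apply, NatTrans.id_app, types_id_apply, dif_pos,
    eqToHom_refl, Category.id_comp]
  erw [proj_app, Equiv.symm_apply_apply]
  simp only [dif_pos, eqToHom_refl, Category.id_comp]

/-- `F` is not isomorphic to any corepresentable functor. -/
theorem noIso (G : GrpCat.{u}) : ¬ Nonempty (F ≅ coyoneda.obj (op G)) := by
  rintro ⟨e⟩
  set κ := Order.succ (Cardinal.mk (G : Type u)) with hκdef
  have hκ : Cardinal.mk (G : Type u) < κ := Order.lt_succ _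
  set γ : coyoneda.obj (op (SG κ)) ⟶ coyoneda.obj (op G) := incl κ ≫ e.hom with hγ
  set δ : coyoneda.obj (op G) ⟶ coyoneda.obj (op (SG κ)) := e.inv ≫ proj κ with hδ
  have hγδ : γ ≫ δ = 𝟙 _ := by
    rw [hγ, hδ, Category.assoc, Iso.hom_inv_id_assoc, incl_proj]
  set a : G ⟶ SG κ := γ.app (SG κ) (𝟙 (SG κ)) with ha
  set b : SG κ ⟶ G := δ.app G (𝟙 G) with hb
  have key1 : δ.app (SG κ) a = b ≫ a := by
    have := ConcreteCategory.congr_hom (δ.naturality a) (𝟙 G)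
    simp only [Functor.flip_obj_map, yoneda_map_app, TypeCat.ofHom_apply, types_comp_apply, Category.id_comp] at this
    exact this
  have key2 : δ.app (SG κ) (γ.app (SG κ) (𝟙 (SG κ))) = 𝟙 (SG κ) := by
    have := ConcreteCategory.congr_hom (congrArg (fun (n : coyoneda.obj (op (SG κ)) ⟶
        coyoneda.obj (op (SG κ))) => n.app (SG κ)) hγδ) (𝟙 (SG κ))
    simpa using this
  have hba : b ≫ a = 𝟙 (SG κ) := by
    rw [← key1, ha]
    exact key2
  have hz : ∀ z : SG κ, a (b z) = z := by
    intro z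
    have h1 : (b ≫ a) z = (𝟙 (SG κ)) z := by rw [hba]
    simpa using h1
  have hinj : Function.Injective (b : SG κ → G) :=
    Function.LeftInverse.injective hz
  have : Cardinal.mk (SG κ : Type u) ≤ Cardinal.mk (G : Type u) :=
    Cardinal.mk_le_of_injective hinj
  exact absurd (lt_of_lt_of_le hκ ((le_mk_SG κ).trans this)) (lt_irrefl _)

end Stmt4

theorem stmt4 :
    ∃ F : GrpCat.{u} ⥤ Type u,
      Nonempty (PreservesLimitsOfSize.{u, u} F) ∧
        ¬ F.IsCorepresentable ∧
        ∀ G : GrpCat.{u}, ¬ Nonempty (F ≅ coyoneda.obj (Opposite.op G)) := by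
  refine ⟨Stmt4.F, ⟨Stmt4.F_preserves⟩, ?_, Stmt4.noIso⟩
  rintro ⟨X, ⟨hr⟩⟩
  exact Stmt4.noIso X ⟨hr.toIso.symm⟩
end

section
/- Every functor F : TopCat ⥤ Type u that preserves all small limits is corepresentable: there exists a topological space X such that F is naturally isomorphic to the functor Hom(X, −) sending a space T to the set of continuous maps from X to T. -/
/-!
STATEMENT 5: Every functor `TopCat ⥤ Type u` preserving all small limits is
corepresentable by a topological space.
-/

open CategoryTheory CategoryTheory.Limits

universe u

namespace Stmt5Aux

/-- The family of images of open sets under `f`. -/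
def fam {X A : TopCat.{u}} (f : A ⟶ X) : Set (Set X) :=
  {T | ∃ U : Set A, IsOpen U ∧ T = f '' U}

/-- The invariant attached to a mono `f : A ⟶ X`. -/
def key {X A : TopCat.{u}} (f : A ⟶ X) : Set X × Set (Set X) :=
  (Set.range f, fam f)

lemma key_compat {X A B : TopCat.{u}} (f : A ⟶ X) (g : B ⟶ X) (i : A ≅ B)
    (w : i.hom ≫ g = f) : key f = key g := by
  let e : A ≃ₜ B := TopCat.homeoOfIso i
  have hge : ∀ a : A, g (e a) = f a := by
    intro a
    have := ConcreteCategory.congr_hom w a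
    simp at this
    exact this
  have hr : Set.range f = Set.range g := by
    ext x
    constructor
    · rintro ⟨a, rfl⟩
      exact ⟨e a, hge a⟩
    · rintro ⟨b, rfl⟩
      exact ⟨e.symm b, by rw [← hge (e.symm b), e.apply_symm_apply]⟩
  have hfam : fam f = fam g := by
    ext T
    constructor
    · rintro ⟨U, hU, rfl⟩
      refine ⟨e '' U, e.isOpen_image.mpr hU, ?_⟩
      rw [← Set.image_comp]
      exact congrArg (· '' U) (funext fun a => (hge a).symm)
    · rintro ⟨V, hV, rfl⟩
      refine ⟨e ⁻¹' V, hV.preimage e.continuous, ?_⟩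
      have : f '' (e ⁻¹' V) = g '' (e '' (e ⁻¹' V)) := by
        rw [← Set.image_comp]
        exact congrArg (· '' (e ⁻¹' V)) (funext fun a => (hge a).symm)
      rw [Set.image_preimage_eq V e.surjective] at this
      exact this.symm
  simp [key, hr, hfam]

lemma cont_aux {X A B : TopCat.{u}} (f : A ⟶ X) (g : B ⟶ X)
    (injf : Function.Injective f) (injg : Function.Injective g)
    (e : A ≃ B) (hge : ∀ a, g (e a) = f a) (hfam : fam g ⊆ fam f) :
    Continuous e := by
  rw [continuous_def]
  intro V hV
  obtain ⟨U, hU, hUeq⟩ := hfam ⟨V, hV, rfl⟩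
  have hpre : e ⁻¹' V = U := by
    ext a
    have h1 : e a ∈ V ↔ g (e a) ∈ g '' V := (injg.mem_set_image).symm
    have h2 : a ∈ U ↔ f a ∈ f '' U := (injf.mem_set_image).symm
    simp only [Set.mem_preimage, h1, h2, hge a, ← hUeq]
  rw [hpre]
  exact hU

lemma key_inj {X A B : TopCat.{u}} (f : A ⟶ X) (g : B ⟶ X) [Mono f] [Mono g]
    (h : key f = key g) : Subobject.mk f = Subobject.mk g := by
  have injf : Function.Injective f := (TopCat.mono_iff_injective f).mp ‹_›
  have injg : Function.Injective g := (TopCat.mono_iff_injective g).mp ‹_›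
  have hr : Set.range f = Set.range g := congrArg Prod.fst h
  have hfam : fam f = fam g := congrArg Prod.snd h
  let e : A ≃ B :=
    (Equiv.ofInjective f injf).trans ((Equiv.setCongr hr).trans
      (Equiv.ofInjective g injg).symm)
  have hge : ∀ a, g (e a) = f a := by
    intro a
    have h1 : g (e a) = ((Equiv.ofInjective g injg) (e a) : Set.range g).val := rfl
    rw [h1]
    show ((Equiv.ofInjective g injg) ((Equiv.ofInjective g injg).symm _) : Set.range g).val = f a
    rw [Equiv.apply_symm_apply]
    rfl
  have hgf : ∀ b, f (e.symm b) = g b := by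
    intro b
    rw [← hge (e.symm b), e.apply_symm_apply]
  have hc1 : Continuous e := cont_aux f g injf injg e hge (le_of_eq hfam.symm)
  have hc2 : Continuous e.symm := cont_aux g f injg injf e.symm hgf (le_of_eq hfam)
  let homeo : A ≃ₜ B := ⟨e, hc1, hc2⟩
  exact Subobject.mk_eq_mk_of_comm f g (TopCat.isoOfHomeo homeo)
    (by ext a; exact hge a)

instance : WellPowered.{u} TopCat.{u} where
  subobject_small X := by
    have hinj : Function.Injective (Subobject.lift (fun A f _ => key f)
        (fun A B f g _ _ i w => key_compat f g i w) : Subobject X → _) := by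
      intro P Q
      refine Subobject.ind₂ (fun P Q =>
        Subobject.lift _ _ P = Subobject.lift _ _ Q → P = Q) ?_ P Q
      intro A B f g _ _ h
      exact key_inj f g h
    exact small_of_injective hinj

/-- The indiscrete two-"point" space. -/
def indisc : TopCat.{u} := @TopCat.of (ULift.{u} Prop) ⊤

lemma isCoseparating : ObjectProperty.IsCoseparating (ObjectProperty.singleton indisc.{u}) := by
  intro X Y f g h
  ext x
  by_contra hne
  let φ : Y ⟶ indisc := @TopCat.ofHom _ (ULift.{u} Prop) _ ⊤ (@ContinuousMap.mk _ _ _ ⊤ (fun y => ULift.up (y = f x))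
    (by exact continuous_top))
  have := h indisc (by simp) φ
  have hx := ConcreteCategory.congr_hom this x
  have hp : ((f x = f x) = (g x = f x)) := congrArg ULift.down hx
  exact hne ((hp ▸ (rfl : f x = f x)) : g x = f x).symm

end Stmt5Aux

open Stmt5Aux in
theorem stmt5 (F : TopCat.{u} ⥤ Type u) [PreservesLimitsOfSize.{u, u} F] :
    ∃ X : TopCat.{u}, Nonempty (F ≅ coyoneda.obj (Opposite.op X)) := by
  haveI : Small.{u} ({indisc} : Set TopCat.{u}) := small_subsingleton _
  haveI : F.IsRightAdjoint :=
    isRightAdjoint_of_preservesLimits_of_isCoseparating isCoseparating F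
  let adj := Adjunction.ofIsRightAdjoint F
  refine ⟨F.leftAdjoint.obj PUnit, ⟨?_⟩⟩
  exact ((adj.corepresentableBy PUnit).toIso ≪≫
    Functor.isoWhiskerLeft F Coyoneda.punitIso ≪≫ F.rightUnitor).symm
end

section
/- Every functor F : TopCat ⥤ Type u that preserves all small colimits is naturally isomorphic to the functor T ↦ S × |T|, where S = F(*) is the value of F at the one-point space and |T| denotes the underlying set of T. In other words, every cocontinuous functor Top → Set is a coproduct of copies of the forgetful functor. -/
/-!
STATEMENT 6: Every small-colimit-preserving functor `F : TopCat ⥤ Type u` is naturally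
isomorphic to `T ↦ S × |T|` where `S = F(*)` is the value of `F` at the one-point space.
-/

open CategoryTheory CategoryTheory.Limits

universe u

/-- The functor `T ↦ S × |T|`, i.e. the coproduct of `S` many copies of the forgetful
functor `TopCat ⥤ Type u`. -/
def prodForget (S : Type u) : TopCat.{u} ⥤ Type u where
  obj T := S × T
  map f := TypeCat.ofHom fun p => (p.1, f p.2)

set_option linter.unusedSectionVars false
set_option linter.unusedVariables false

namespace Isbell6

attribute [local instance] Classical.propDecidable

abbrev Pt : TopCat.{u} := TopCat.of PUnit

def pt {T : TopCat.{u}} (x : T) : Pt ⟶ T := ConcreteCategory.ofHom ⟨fun _ => x, continuous_const⟩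

def tmap (T : TopCat.{u}) : T ⟶ Pt := ConcreteCategory.ofHom ⟨fun _ => PUnit.unit, continuous_const⟩

variable (F : TopCat.{u} ⥤ Type u) [PreservesColimitsOfSize.{u, u} F]

def q (T : TopCat.{u}) (s : F.obj Pt) (x : T) : F.obj T := F.map (pt x) s

lemma map_q {T T' : TopCat.{u}} (f : T ⟶ T') (s : F.obj Pt) (x : T) :
    F.map f (q F T s x) = q F T' s (f x) := by
  rw [q, q, ← FunctorToTypes.map_comp_apply]
  rfl

lemma q_pt (s : F.obj Pt) (x : Pt) : q F Pt s x = s := by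
  have h : pt x = 𝟙 Pt := rfl
  rw [q, h, FunctorToTypes.map_id_apply]

lemma q_fst {T : TopCat.{u}} {s s' : F.obj Pt} {x x' : T}
    (h : q F T s x = q F T s' x') : s = s' := by
  have := congrArg (F.map (tmap T)) h
  rwa [map_q, map_q, q_pt, q_pt] at this

/-! ### Discrete spaces -/

def cofan (X : Type u) [TopologicalSpace X] [DiscreteTopology X] :
    Cofan (fun _ : X => Pt.{u}) :=
  Cofan.mk (TopCat.of X) (fun x => pt x)

def cofanIsColimit (X : Type u) [TopologicalSpace X] [DiscreteTopology X] :
    IsColimit (cofan X) :=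
  mkCofanColimit _
    (fun t => (ConcreteCategory.ofHom (⟨fun x => t.inj x PUnit.unit, continuous_of_discreteTopology⟩ :
      C(X, t.pt)) : TopCat.of X ⟶ t.pt))
    (fun t x => TopCat.ext fun _ => rfl)
    (fun t m h => TopCat.ext fun x => ConcreteCategory.congr_hom (h x) PUnit.unit)

lemma q_surj_disc (X : Type u) [TopologicalSpace X] [DiscreteTopology X]
    (z : F.obj (TopCat.of X)) : ∃ s x, q F (TopCat.of X) s x = z := by
  obtain ⟨⟨x⟩, s, hs⟩ := Types.jointly_surjective _
    (isColimitOfPreserves F (cofanIsColimit X)) z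
  exact ⟨s, x, hs⟩

def rhoCocone (X : Type u) [TopologicalSpace X] [DiscreteTopology X] :
    Cocone (Discrete.functor (fun _ : X => Pt.{u}) ⋙ F) where
  pt := F.obj Pt × X
  ι := Discrete.natTrans fun j => TypeCat.ofHom fun s => (s, j.as)

lemma q_inj_disc (X : Type u) [TopologicalSpace X] [DiscreteTopology X]
    {s s' : F.obj Pt} {x x' : X}
    (h : q F (TopCat.of X) s x = q F (TopCat.of X) s' x') : s = s' ∧ x = x' := by
  have hc := isColimitOfPreserves F (cofanIsColimit X)
  have h1 : hc.desc (rhoCocone F X) (q F (TopCat.of X) s x) = (s, x) :=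
    ConcreteCategory.congr_hom (hc.fac (rhoCocone F X) ⟨x⟩) s
  have h2 : hc.desc (rhoCocone F X) (q F (TopCat.of X) s' x') = (s', x') :=
    ConcreteCategory.congr_hom (hc.fac (rhoCocone F X) ⟨x'⟩) s'
  have : (s, x) = (s', x') := by
    rw [← h1, ← h2, h]
  exact ⟨congrArg Prod.fst this, congrArg Prod.snd this⟩

/-! ### Surjectivity -/

def DiscT (X : Type u) : Type u := X
instance (X : Type u) : TopologicalSpace (DiscT X) := ⊥
instance (X : Type u) : DiscreteTopology (DiscT X) := ⟨rfl⟩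

def epsilon (T : TopCat.{u}) : TopCat.of (DiscT T) ⟶ T := ConcreteCategory.ofHom ⟨fun x => x, continuous_bot⟩

lemma q_surj (T : TopCat.{u}) (e : F.obj T) : ∃ s x, q F T s x = e := by
  haveI : PreservesColimitsOfSize.{0, 0} F := preservesColimitsOfSize_shrink F
  haveI : Epi (epsilon T) := (TopCat.epi_iff_surjective _).2 fun x => ⟨x, rfl⟩
  haveI : Epi (F.map (epsilon T)) := F.map_epi _
  obtain ⟨d, hd⟩ := (epi_iff_surjective _).1 this e
  obtain ⟨s, x, hx⟩ := q_surj_disc F (DiscT T) d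
  refine ⟨s, x, ?_⟩
  rw [← hd, ← hx, map_q]
  rfl

/-! ### The Cantor space and its quotient onto the two-point indiscrete space -/

abbrev Cant : Type u := ULift.{u} (ℕ → Bool)

def Y : TopCat.{u} := TopCat.of Cant

def IBool : TopCat.{u} := @TopCat.of (ULift.{u} Bool) ⊤

noncomputable def label (y : Cant.{u}) : ULift.{u} Bool :=
  if Set.Finite {n | y.down n = true} then ⟨false⟩ else ⟨true⟩

def cF : Cant.{u} := ⟨fun _ => false⟩
def cT : Cant.{u} := ⟨fun _ => true⟩

lemma label_cF : label.{u} cF = ⟨false⟩ := by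
  have : Set.Finite {n | cF.{u}.down n = true} := by
    convert Set.finite_empty
    ext n
    simp [cF]
  simp [label, this]

lemma label_cT : label.{u} cT = ⟨true⟩ := by
  have h : {n | cT.{u}.down n = true} = Set.univ := by
    ext n; simp [cT]
  have : ¬ Set.Finite {n | cT.{u}.down n = true} := by
    rw [h]
    exact Set.infinite_univ
  simp [label, this]

lemma not_isOpen_fin :
    ¬ IsOpen {g : ℕ → Bool | Set.Finite {n | g n = true}} := by
  intro h
  obtain ⟨I, uu, hu, hsub⟩ := isOpen_pi_iff.1 h (fun _ => false) (by
    show Set.Finite _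
    convert Set.finite_empty
    ext n; simp)
  set g : ℕ → Bool := fun n => if n ∈ I then false else true with hg
  have hmem : g ∈ (I : Set ℕ).pi uu := by
    intro n hn
    have hn' : n ∈ I := hn
    have : g n = false := by simp [g, hn']
    rw [this]
    exact (hu n hn).2
  have hfin : Set.Finite {n | g n = true} := hsub hmem
  have : {n | g n = true} = (↑I : Set ℕ)ᶜ := by
    ext n; by_cases hn : n ∈ I <;> simp [g, hn]
  rw [this] at hfin
  exact I.finite_toSet.infinite_compl hfin

lemma not_isOpen_infin :
    ¬ IsOpen {g : ℕ → Bool | ¬ Set.Finite {n | g n = true}} := by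
  intro h
  obtain ⟨I, uu, hu, hsub⟩ := isOpen_pi_iff.1 h (fun _ => true) (by
    show ¬ Set.Finite _
    have : {n : ℕ | true = true} = Set.univ := by ext n; simp
    rw [this]
    exact Set.infinite_univ)
  set g : ℕ → Bool := fun n => if n ∈ I then true else false with hg
  have hmem : g ∈ (I : Set ℕ).pi uu := by
    intro n hn
    have hn' : n ∈ I := hn
    have : g n = true := by simp [g, hn']
    rw [this]
    exact (hu n hn).2
  have hinf : ¬ Set.Finite {n | g n = true} := hsub hmem
  apply hinf
  apply Set.Finite.subset I.finite_toSet
  intro n hn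
  by_contra hni
  simp [g, hni] at hn

lemma not_isOpen_labelF : ¬ IsOpen {y : Cant.{u} | label y = ⟨false⟩} := by
  intro h
  apply not_isOpen_fin
  have hcont : Continuous (ULift.up.{u} : (ℕ → Bool) → Cant.{u}) := continuous_uliftUp
  have := h.preimage hcont
  convert this using 1
  ext g
  simp only [Set.mem_setOf_eq, Set.mem_preimage, label]
  split <;> simp_all

lemma not_isOpen_labelT : ¬ IsOpen {y : Cant.{u} | label y = ⟨true⟩} := by
  intro h
  apply not_isOpen_infin
  have hcont : Continuous (ULift.up.{u} : (ℕ → Bool) → Cant.{u}) := continuous_uliftUp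
  have := h.preimage hcont
  convert this using 1
  ext g
  simp only [Set.mem_setOf_eq, Set.mem_preimage, label]
  split <;> simp_all

noncomputable def cmap : Y.{u} ⟶ IBool.{u} := ConcreteCategory.ofHom ⟨label, continuous_top⟩

def Ker : Type u := {z : Cant.{u} × Cant.{u} // label z.1 = label z.2}

def p₁ : TopCat.of (DiscT Ker.{u}) ⟶ Y.{u} := ConcreteCategory.ofHom ⟨fun z => z.val.1, continuous_bot⟩
def p₂ : TopCat.of (DiscT Ker.{u}) ⟶ Y.{u} := ConcreteCategory.ofHom ⟨fun z => z.val.2, continuous_bot⟩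

lemma pw : p₁.{u} ≫ cmap = p₂.{u} ≫ cmap :=
  TopCat.ext fun z => z.prop

noncomputable def cofork : Cofork p₁.{u} p₂.{u} := Cofork.ofπ cmap pw

noncomputable def descFun {Z : TopCat.{u}} (π : Y.{u} ⟶ Z) (b : ULift.{u} Bool) : Z :=
  if b.down = true then π cT else π cF

lemma pi_fiber (s : Cofork p₁.{u} p₂.{u}) (y : Cant.{u}) :
    s.π y = descFun s.π (label y) := by
  by_cases hy : Set.Finite {n | y.down n = true}
  · have hl : label y = ⟨false⟩ := by simp [label, hy]
    have hk : label y = label cF := by rw [hl, label_cF]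
    have := ConcreteCategory.congr_hom s.condition (⟨(y, cF), hk⟩ : Ker)
    rw [hl]
    exact this
  · have hl : label y = ⟨true⟩ := by simp [label, hy]
    have hk : label y = label cT := by rw [hl, label_cT]
    have := ConcreteCategory.congr_hom s.condition (⟨(y, cT), hk⟩ : Ker)
    rw [hl]
    exact this

lemma ulift_bool_cases (b : ULift.{u} Bool) : b = ⟨false⟩ ∨ b = ⟨true⟩ := by
  obtain ⟨b⟩ := b
  cases b
  · exact Or.inl rfl
  · exact Or.inr rfl

lemma descFun_continuous (s : Cofork p₁.{u} p₂.{u}) :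
    @Continuous (ULift.{u} Bool) s.pt ⊤ _ (descFun s.π) := by
  rw [continuous_def]
  intro U hU
  rw [TopologicalSpace.isOpen_top_iff]
  by_cases hf : ((⟨false⟩ : ULift.{u} Bool) ∈ descFun s.π ⁻¹' U) <;>
    by_cases ht : ((⟨true⟩ : ULift.{u} Bool) ∈ descFun s.π ⁻¹' U)
  · right
    ext b
    rcases ulift_bool_cases b with h | h <;> subst h <;> simpa
  · exfalso
    apply not_isOpen_labelF.{u}
    have hpre : ⇑s.π ⁻¹' U = {y : Cant.{u} | label y = ⟨false⟩} := by
      ext y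
      constructor
      · intro hy
        rcases ulift_bool_cases (label y) with h | h
        · exact h
        · exfalso
          apply ht
          have : s.π y ∈ U := hy
          rwa [pi_fiber s y, h] at this
      · intro hy
        show s.π y ∈ U
        rw [pi_fiber s y, (hy : label y = ⟨false⟩)]
        exact hf
    have := hU.preimage s.π.hom.continuous
    rwa [hpre] at this
  · exfalso
    apply not_isOpen_labelT.{u}
    have hpre : ⇑s.π ⁻¹' U = {y : Cant.{u} | label y = ⟨true⟩} := by
      ext y
      constructor
      · intro hy
        rcases ulift_bool_cases (label y) with h | h
        · exfalso
          apply hf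
          have : s.π y ∈ U := hy
          rwa [pi_fiber s y, h] at this
        · exact h
      · intro hy
        show s.π y ∈ U
        rw [pi_fiber s y, (hy : label y = ⟨true⟩)]
        exact ht
    have := hU.preimage s.π.hom.continuous
    rwa [hpre] at this
  · left
    ext b
    rcases ulift_bool_cases b with h | h <;> subst h <;> simpa

noncomputable def coforkIsColimit : IsColimit cofork.{u} := by
  refine Cofork.IsColimit.mk _
    (fun s => (ConcreteCategory.ofHom ⟨descFun s.π, descFun_continuous s⟩ : IBool.{u} ⟶ s.pt))
    (fun s => ?_) (fun s m hm => ?_)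
  · refine TopCat.ext fun y => ?_
    exact (pi_fiber s y).symm
  · refine TopCat.ext fun b => ?_
    rcases ulift_bool_cases b with h | h <;> subst h
    · have h1 : cmap.{u} cF = ⟨false⟩ := label_cF
      have h2 := ConcreteCategory.congr_hom hm cF
      show m ⟨false⟩ = descFun s.π ⟨false⟩
      have h3 : descFun s.π (⟨false⟩ : ULift.{u} Bool) = s.π cF := by simp [descFun]
      exact ((congrArg m h1).symm.trans h2).trans h3.symm
    · have h1 : cmap.{u} cT = ⟨true⟩ := label_cT
      have h2 := ConcreteCategory.congr_hom hm cT
      show m ⟨true⟩ = descFun s.π ⟨true⟩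
      have h3 : descFun s.π (⟨true⟩ : ULift.{u} Bool) = s.π cT := by simp [descFun]
      exact ((congrArg m h1).symm.trans h2).trans h3.symm

/-! ### Transporting the coequalizer through `F` -/

def rel (u v : F.obj Y.{u}) : Prop :=
  ∃ z, F.map p₁ z = u ∧ F.map p₂ z = v

def quotCocone : Cocone (parallelPair p₁.{u} p₂.{u} ⋙ F) where
  pt := Quot (rel F)
  ι :=
    { app := fun j =>
        match j with
        | WalkingParallelPair.zero => TypeCat.ofHom fun z => Quot.mk _ (F.map p₁ z)
        | WalkingParallelPair.one => TypeCat.ofHom (Quot.mk _)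
      naturality := by
        intro i j f
        cases f using WalkingParallelPairHom.casesOn with
        | left => rfl
        | right =>
            refine ConcreteCategory.hom_ext _ _ fun z => ?_
            exact (Quot.sound ⟨z, rfl, rfl⟩).symm
        | id =>
            cases i <;> · show F.map (𝟙 _) ≫ _ = _
                          rw [F.map_id]
                          rfl }

lemma eqvGen_of_map_cmap_eq {un vn : F.obj Y.{u}}
    (h : F.map cmap un = F.map cmap vn) : Relation.EqvGen (rel F) un vn := by
  haveI : PreservesColimitsOfSize.{0, 0} F := preservesColimitsOfSize_shrink F
  have hc := isColimitOfPreserves F coforkIsColimit.{u}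
  have hfac := hc.fac (quotCocone F) WalkingParallelPair.one
  have h1 : hc.desc (quotCocone F) (F.map cmap un) = Quot.mk (rel F) un := ConcreteCategory.congr_hom hfac un
  have h2 : hc.desc (quotCocone F) (F.map cmap vn) = Quot.mk (rel F) vn := ConcreteCategory.congr_hom hfac vn
  apply Quot.eq.1
  rw [← h1, ← h2, h]

lemma q_inj_Y {s s' : F.obj Pt} {y y' : Cant.{u}}
    (h : q F Y s y = q F Y s' y') : s = s' ∧ y = y' := by
  have hs : s = s' := q_fst F h
  refine ⟨hs, ?_⟩
  by_contra hne
  have hdown : y.down ≠ y'.down := fun hd => hne (by cases y; cases y'; cases hd; rfl)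
  obtain ⟨n, hn⟩ := Function.ne_iff.1 hdown
  let χ : Y.{u} ⟶ TopCat.of (ULift.{u} Bool) :=
    ConcreteCategory.ofHom ⟨fun z => ULift.up (z.down n),
      continuous_uliftUp.comp ((continuous_apply n).comp continuous_uliftDown)⟩
  have := congrArg (F.map χ) h
  erw [map_q, map_q] at this
  have h2 := (q_inj_disc F (ULift.{u} Bool) this).2
  exact hn (congrArg ULift.down h2)

lemma chain {un vn : F.obj Y.{u}} (h : Relation.EqvGen (rel F) un vn) :
    ∀ (s : F.obj Pt) (y : Cant.{u}),
    (un = q F Y s y → ∃ y', vn = q F Y s y' ∧ label y = label y') ∧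
    (vn = q F Y s y → ∃ y', un = q F Y s y' ∧ label y = label y') := by
  induction h with
  | rel u v hr =>
      intro s y
      obtain ⟨z, hz1, hz2⟩ := hr
      obtain ⟨s₀, z₀, hz⟩ := q_surj_disc F (DiscT Ker.{u}) z
      have e1 : F.map p₁ z = q F Y s₀ z₀.val.1 := by rw [← hz, map_q]; rfl
      have e2 : F.map p₂ z = q F Y s₀ z₀.val.2 := by rw [← hz, map_q]; rfl
      constructor
      · intro hu
        have h0 : q F Y s₀ z₀.val.1 = q F Y s y := by rw [← e1, hz1, hu]
        obtain ⟨hs, hy⟩ := q_inj_Y F h0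
        refine ⟨z₀.val.2, ?_, ?_⟩
        · rw [← hz2, e2, hs]
        · rw [← hy]; exact z₀.prop
      · intro hv
        have h0 : q F Y s₀ z₀.val.2 = q F Y s y := by rw [← e2, hz2, hv]
        obtain ⟨hs, hy⟩ := q_inj_Y F h0
        refine ⟨z₀.val.1, ?_, ?_⟩
        · rw [← hz1, e1, hs]
        · rw [← hy]; exact z₀.prop.symm
  | refl u => exact fun s y => ⟨fun hu => ⟨y, hu, rfl⟩, fun hu => ⟨y, hu, rfl⟩⟩
  | symm u v _ ih => exact fun s y => ⟨(ih s y).2, (ih s y).1⟩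
  | trans u v w _ _ ih1 ih2 =>
      intro s y
      constructor
      · intro hu
        obtain ⟨y₁, hv, hl1⟩ := (ih1 s y).1 hu
        obtain ⟨y₂, hw, hl2⟩ := (ih2 s y₁).1 hv
        exact ⟨y₂, hw, hl1.trans hl2⟩
      · intro hw
        obtain ⟨y₁, hv, hl1⟩ := (ih2 s y).2 hw
        obtain ⟨y₂, hu, hl2⟩ := (ih1 s y₁).2 hv
        exact ⟨y₂, hu, hl1.trans hl2⟩

lemma q_IBool_ne (s : F.obj Pt) :
    q F IBool s ⟨false⟩ ≠ q F IBool s ⟨true⟩ := by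
  intro h
  have hF : F.map cmap (q F Y s cF) = q F IBool s ⟨false⟩ := by
    erw [map_q]
    exact congrArg (q F IBool s) label_cF
  have hT : F.map cmap (q F Y s cT) = q F IBool s ⟨true⟩ := by
    erw [map_q]
    exact congrArg (q F IBool s) label_cT
  have hh : F.map cmap (q F Y s cF) = F.map cmap (q F Y s cT) := by rw [hF, hT, h]
  obtain ⟨y', hv, hl⟩ := (chain F (eqvGen_of_map_cmap_eq F hh) s cF).1 rfl
  obtain ⟨-, hy⟩ := q_inj_Y F hv
  rw [← hy, label_cF, label_cT] at hl
  simp at hl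

lemma q_inj (T : TopCat.{u}) {s s' : F.obj Pt} {x x' : T}
    (h : q F T s x = q F T s' x') : s = s' ∧ x = x' := by
  have hs : s = s' := q_fst F h
  subst hs
  refine ⟨rfl, ?_⟩
  by_contra hne
  let χ : T ⟶ IBool.{u} :=
    ConcreteCategory.ofHom ⟨fun t => if t = x then ⟨false⟩ else ⟨true⟩, continuous_top⟩
  have hx : χ x = ⟨false⟩ := if_pos rfl
  have hx' : χ x' = ⟨true⟩ := if_neg (fun hc => hne hc.symm)
  have := congrArg (F.map χ) h
  rw [map_q, map_q, hx, hx'] at this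
  exact q_IBool_ne F s this

/-! ### Conclusion -/

noncomputable def eta : prodForget (F.obj (TopCat.of PUnit)) ⟶ F where
  app T := TypeCat.ofHom fun (p : F.obj (TopCat.of PUnit) × T) => q F T p.1 p.2
  naturality T T' f := ConcreteCategory.hom_ext _ _ fun (p : F.obj (TopCat.of PUnit) × T) => (map_q F f p.1 p.2).symm

lemma eta_bij (T : TopCat.{u}) : Function.Bijective ((eta F).app T) := by
  constructor
  · rintro ⟨s, x⟩ ⟨s', x'⟩ h
    obtain ⟨h1, h2⟩ := q_inj F T h
    exact Prod.ext h1 h2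
  · intro e
    obtain ⟨s, x, hx⟩ := q_surj F T e
    exact ⟨(s, x), hx⟩

end Isbell6


theorem stmt6 (F : TopCat.{u} ⥤ Type u) [PreservesColimitsOfSize.{u, u} F] :
    Nonempty (F ≅ prodForget (F.obj (TopCat.of PUnit))) := by
  haveI : ∀ T, IsIso ((Isbell6.eta F).app T) :=
    fun T => (isIso_iff_bijective _).2 (Isbell6.eta_bij F T)
  haveI : IsIso (Isbell6.eta F) := NatIso.isIso_of_isIso_app _
  exact ⟨(asIso (Isbell6.eta F)).symm⟩
end

section
/- The assignment sending a set S to the functor T ↦ S × |T| (where |T| is the underlying set of the topological space T) defines a fully faithful functor from Type u to the functor category TopCat ⥤ Type u, whose essential image consists exactly of the functors preserving all small colimits. Hence the full subcategory of TopCat ⥤ Type u on the colimit-preserving functors is equivalent to the category Type u of sets. -/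
set_option linter.unusedSectionVars false

/-!
STATEMENT 7: The assignment `S ↦ (T ↦ S × |T|)` is a fully faithful functor
`Type u ⥤ (TopCat ⥤ Type u)` whose essential image consists exactly of the functors
preserving all small colimits; hence the full subcategory of colimit-preserving functors
`TopCat ⥤ Type u` is equivalent to `Type u`.
-/

open CategoryTheory CategoryTheory.Limits
universe u


/-- The functor `Type u ⥤ (TopCat ⥤ Type u)` sending `S` to `T ↦ S × |T|`. -/
def prodForgetFunctor : Type u ⥤ TopCat.{u} ⥤ Type u where
  obj := prodForget
  map g := { app := fun _ => TypeCat.ofHom fun p => (g p.1, p.2) }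

namespace Stmt7
noncomputable section
open Classical

abbrev pt : TopCat.{u} := TopCat.of PUnit
def ptTo {T : TopCat.{u}} (t : ↑T) : pt ⟶ T := TopCat.ofHom ⟨fun _ => t, continuous_const⟩
def toPt (T : TopCat.{u}) : T ⟶ pt := TopCat.ofHom ⟨fun _ => PUnit.unit, continuous_const⟩

variable (F : TopCat.{u} ⥤ Type u)

def θ (T : TopCat.{u}) (p : F.obj pt × ↑T) : F.obj T := F.map (ptTo p.2) p.1

lemma θ_nat {T W : TopCat.{u}} (h : T ⟶ W) (s : F.obj pt) (t : ↑T) :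
    F.map h (θ F T (s, t)) = θ F W (s, h t) := by
  show (F.map (ptTo t) ≫ F.map h) s = _
  rw [← F.map_comp]
  have : ptTo t ≫ h = ptTo (h t) := by ext ⟨⟩; rfl
  rw [this]; rfl

lemma θ_pt (s : F.obj pt) (x : PUnit) : θ F pt (s, x) = s := by
  have : ptTo (T := pt) x = 𝟙 pt := by ext ⟨⟩
  show F.map (ptTo x) s = s
  rw [this, F.map_id]; rfl

def disc (X : Type u) : TopCat.{u} := @TopCat.of X ⊥

def discCofan (X : Type u) : Cofan (fun _ : X => pt.{u}) :=
  Cofan.mk (disc X) (fun x => ptTo (T := disc X) x)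

def discIsColimit (X : Type u) : IsColimit (discCofan X) :=
  mkCofanColimit _
    (fun t => ConcreteCategory.ofHom ⟨fun x => t.inj x PUnit.unit, continuous_bot⟩)
    (fun t x => by ext ⟨⟩; rfl)
    (fun t m hm => by
      ext x
      exact ConcreteCategory.congr_hom (hm x) PUnit.unit)

variable [PreservesColimitsOfSize.{u, u} F]

lemma theta_disc_bij (X : Type u) : Function.Bijective (θ F (disc X)) := by
  have hc : IsColimit (F.mapCocone (discCofan X)) :=
    isColimitOfPreserves F (discIsColimit X)
  constructor
  · -- injective via desc
    let c : Cocone (Discrete.functor (fun _ : X => pt.{u}) ⋙ F) :=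
      { pt := F.obj pt × X
        ι := Discrete.natTrans (fun j => TypeCat.ofHom fun s => (s, j.as)) }
    have hfac : ∀ (x : X) (s : F.obj pt),
        hc.desc c (θ F (disc X) (s, x)) = (s, x) := by
      intro x s
      have := types_congr_hom (hc.fac c ⟨x⟩) s
      exact this
    intro p q hpq
    have := congrArg (hc.desc c) hpq
    rw [show p = (p.1, p.2) from rfl, show q = (q.1, q.2) from rfl] at this ⊢
    rw [hfac p.2 p.1, hfac q.2 q.1] at this
    exact this
  · intro a
    obtain ⟨⟨x⟩, s, hs⟩ := Types.jointly_surjective _ hc a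
    exact ⟨(s, x), hs⟩

lemma theta_surj (T : TopCat.{u}) : Function.Surjective (θ F T) := by
  haveI : PreservesColimitsOfSize.{0, 0} F := preservesColimitsOfSize_shrink F
  let dT : disc ↑T ⟶ T := ConcreteCategory.ofHom ⟨id, continuous_bot⟩
  haveI : Epi dT := (TopCat.epi_iff_surjective dT).2 Function.surjective_id
  haveI : Epi (F.map dT) := inferInstance
  have hsurj : Function.Surjective (F.map dT) :=
    (CategoryTheory.epi_iff_surjective (F.map dT)).1 inferInstance
  intro a
  obtain ⟨b, rfl⟩ := hsurj a
  obtain ⟨⟨s, x⟩, rfl⟩ := (theta_disc_bij F ↑T).2 b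
  exact ⟨(s, x), (θ_nat F dT s x).symm⟩


lemma theta_inj_of_sep (T : TopCat.{u})
    (hsep : ∀ y z : ↑T, y ≠ z → ∃ (W : TopCat.{u}) (h : T ⟶ W),
      Function.Injective (θ F W) ∧ h y ≠ h z) :
    Function.Injective (θ F T) := by
  rintro ⟨s, y⟩ ⟨s', z⟩ he
  have hs : s = s' := by
    have h1 := congrArg (F.map (toPt T)) he
    rw [θ_nat, θ_nat, θ_pt, θ_pt] at h1
    exact h1
  have hyz : y = z := by
    by_contra hne
    obtain ⟨W, h, hinj, hne'⟩ := hsep y z hne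
    have h2 := congrArg (F.map h) he
    rw [θ_nat, θ_nat] at h2
    exact hne' (congrArg Prod.snd (hinj h2))
  rw [hs, hyz]

/-! ### The Sierpinski space -/

def SP : Type u := ULift Bool

instance spTop : TopologicalSpace SP where
  IsOpen U := ULift.up false ∈ U → ULift.up true ∈ U
  isOpen_univ := fun _ => trivial
  isOpen_inter := fun U V hU hV h => ⟨hU h.1, hV h.2⟩
  isOpen_sUnion := fun S hS h => by
    obtain ⟨U, hUS, hU⟩ := h
    exact ⟨U, hUS, hS U hUS hU⟩

def sierp : TopCat.{u} := TopCat.of SP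

/-! ### The convergent sequence space -/

abbrev Aty : Type u := Option (ULift ℕ)

instance aTop : TopologicalSpace Aty where
  IsOpen U := (none : Aty) ∈ U → {n : ULift ℕ | (some n : Aty) ∉ U}.Finite
  isOpen_univ := fun _ => by simp
  isOpen_inter := fun U V hU hV h => by
    refine (((hU h.1).union (hV h.2)).subset ?_)
    intro n hn
    simp only [Set.mem_setOf_eq, Set.mem_union] at hn ⊢
    by_contra hc
    push_neg at hc
    exact hn ⟨hc.1, hc.2⟩
  isOpen_sUnion := fun S hS h => by
    obtain ⟨U, hUS, hU⟩ := h
    refine (hS U hUS hU).subset ?_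
    intro n hn
    simp only [Set.mem_setOf_eq] at hn ⊢
    exact fun hc => hn ⟨U, hUS, hc⟩

def A : TopCat.{u} := TopCat.of Aty

def chiFun (n : ULift.{u} ℕ) : Aty → ULift.{u} Bool :=
  fun a => if a = some n then ULift.up true else ULift.up false

lemma chiFun_cont (n : ULift.{u} ℕ) : @Continuous Aty (ULift.{u} Bool) _ ⊥ (chiFun n) := by
  rw [continuous_def]
  intro U _ hnone
  have hfalse : ULift.up false ∈ U := by simpa [chiFun] using hnone
  refine (Set.finite_singleton n).subset ?_
  intro k hk
  simp only [Set.mem_setOf_eq, Set.mem_preimage, chiFun] at hk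
  simp only [Set.mem_singleton_iff]
  by_contra hkn
  rw [if_neg (fun h => hkn (Option.some_injective _ h))] at hk
  exact hk hfalse

def chi (n : ULift.{u} ℕ) : A ⟶ disc (ULift.{u} Bool) := ConcreteCategory.ofHom ⟨chiFun n, chiFun_cont n⟩

lemma theta_A_inj : Function.Injective (θ F A) := by
  apply theta_inj_of_sep
  intro y z hyz
  have key : ∀ n : ULift.{u} ℕ, ∀ w : ↑A, w ≠ some n →
      ∃ (W : TopCat.{u}) (h : A ⟶ W),
        Function.Injective (θ F W) ∧ h (some n) ≠ h w := by
    intro n w hw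
    refine ⟨disc (ULift.{u} Bool), chi n, (theta_disc_bij F _).1, ?_⟩
    have h1 : chiFun n (some n) = ULift.up true := by simp [chiFun]
    have h2 : chiFun n w = ULift.up false := by simp [chiFun]; exact hw
    show chiFun n (some n) ≠ chiFun n w
    rw [h1, h2]
    simp
  rcases y with _ | n
  · rcases z with _ | m
    · exact absurd rfl hyz
    · obtain ⟨W, h, hinj, hne⟩ := key m none (fun h => by cases h)
      exact ⟨W, h, hinj, hne.symm⟩
  · exact key n z (fun h => hyz (by rw [h]))



/-! ### Sierpinski as a coequalizer of the convergent sequence -/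

def piFun : Aty → SP := fun a => ULift.up a.isSome

lemma piFun_cont : Continuous piFun := by
  rw [continuous_def]
  intro U hU
  exact fun hnone => by
    refine Set.finite_empty.subset ?_
    intro k hk
    exact absurd (hU hnone) hk

def piA : A ⟶ sierp := TopCat.ofHom ⟨piFun, piFun_cont⟩

def fA : disc (ULift.{u} ℕ) ⟶ A := ConcreteCategory.ofHom ⟨fun n => some n, continuous_bot⟩
def gA : disc (ULift.{u} ℕ) ⟶ A := ConcreteCategory.ofHom ⟨fun _ => some (ULift.up 0), continuous_bot⟩

lemma sierp_cofork_cond : fA ≫ piA = gA ≫ piA := by ext n; rfl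

def sierpCofork : Cofork fA gA := Cofork.ofπ piA sierp_cofork_cond

lemma cofork_point_eq (s : Cofork fA gA) (n : ULift.{u} ℕ) :
    s.π (some n) = s.π (some (ULift.up 0)) :=
  ConcreteCategory.congr_hom s.condition n

def sierpIsColimit : IsColimit sierpCofork := by
  refine Cofork.IsColimit.mk _
    (fun s => TopCat.ofHom ⟨fun x => cond x.down (s.π (some (ULift.up 0))) (s.π none), ?_⟩)
    (fun s => ?_) (fun s m hm => ?_)
  · rw [continuous_def]
    intro V hV
    exact fun hfalse => by
      have h1 : s.π none ∈ V := hfalse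
      have hopen : IsOpen (s.π ⁻¹' V) := (s.π).hom.continuous.isOpen_preimage V hV
      have hfin : {n : ULift.{u} ℕ | some n ∉ s.π ⁻¹' V}.Finite := hopen h1
      obtain ⟨n₀, hn₀⟩ := hfin.infinite_compl.nonempty
      have h2 : s.π (some n₀) ∈ V := by simp at hn₀; exact hn₀
      have h3 : s.π (some (ULift.up 0)) ∈ V := cofork_point_eq s n₀ ▸ h2
      exact h3
  · ext a
    rcases a with _ | n
    · rfl
    · exact (cofork_point_eq s n).symm
  · ext x
    rcases x with ⟨b⟩
    cases b
    · exact ConcreteCategory.congr_hom hm none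
    · exact ConcreteCategory.congr_hom hm (some (ULift.up 0))

lemma theta_sierp_inj : Function.Injective (θ F sierp) := by
  have hc : IsColimit (F.mapCocone sierpCofork) := isColimitOfPreserves F sierpIsColimit
  let eA : F.obj pt × ↑A ≃ F.obj A :=
    Equiv.ofBijective _ ⟨theta_A_inj F, theta_surj F A⟩
  let cπ : F.obj A ⟶ (F.obj pt × SP : Type u) :=
    TypeCat.ofHom fun a => ((eA.symm a).1, piFun (eA.symm a).2)
  have hcπ : ∀ s (a : Aty), cπ (θ F A (s, a)) = (s, piFun a) := by
    intro s a
    have h1 : eA.symm (θ F A (s, a)) = (s, a) := by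
      exact (Equiv.symm_apply_eq _).2 rfl
    exact congrArg (fun q => (q.1, piFun q.2)) h1
  have hcomm : F.map fA ≫ cπ = F.map gA ≫ cπ := by
    refine ConcreteCategory.hom_ext _ _ fun b => ?_
    obtain ⟨⟨s, n⟩, rfl⟩ := (theta_disc_bij F (ULift.{u} ℕ)).2 b
    show cπ (F.map fA (θ F (disc _) (s, n))) = cπ (F.map gA (θ F (disc _) (s, n)))
    rw [θ_nat, θ_nat]; exact (hcπ s (fA n)).trans (hcπ s (gA n)).symm
  let c : Cocone (parallelPair fA gA ⋙ F) :=
    { pt := F.obj pt × SP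
      ι := { app := fun j => match j with
               | WalkingParallelPair.zero => F.map fA ≫ cπ
               | WalkingParallelPair.one => cπ
             naturality := by
               rintro _ _ (_ | _ | _) <;> simp [hcomm] } }
  have hfac := hc.fac c WalkingParallelPair.one
  have hdesc : ∀ s (p : SP), hc.desc c (θ F sierp (s, p)) = (s, p) := by
    intro s p
    obtain ⟨a, ha⟩ : ∃ a : Aty, piFun a = p := by
      rcases p with ⟨b⟩
      cases b
      · exact ⟨none, rfl⟩
      · exact ⟨some (ULift.up 0), rfl⟩
    have h1 : θ F sierp (s, p) = F.map piA (θ F A (s, a)) := by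
      exact ((θ_nat F piA s a).trans (congrArg (fun q => θ F sierp (s, q)) ha)).symm
    rw [h1]
    have h3 : hc.desc c (F.map piA (θ F A (s, a))) = cπ (θ F A (s, a)) :=
      types_congr_hom hfac (θ F A (s, a))
    rw [h3, hcπ, ha]
  intro p q hpq
  have h := congrArg (hc.desc c) hpq
  rw [show p = (p.1, p.2) from rfl, show q = (q.1, q.2) from rfl] at h ⊢
  exact (hdesc p.1 p.2).symm.trans (h.trans (hdesc q.1 q.2))

/-! ### The filter space at a point -/

def ptop (T : TopCat.{u}) (x : ↑T) : TopologicalSpace ↑T where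
  IsOpen U := x ∈ U → U ∈ nhds x
  isOpen_univ := fun _ => Filter.univ_mem
  isOpen_inter := fun U V hU hV h => Filter.inter_mem (hU h.1) (hV h.2)
  isOpen_sUnion := fun S hS h => by
    obtain ⟨U, hUS, hU⟩ := h
    exact Filter.mem_of_superset (hS U hUS hU) (Set.subset_sUnion_of_mem hUS)

def P (T : TopCat.{u}) (x : ↑T) : TopCat.{u} := @TopCat.of ↑T (ptop T x)

/-- the identity as a map from the filter space to `T` -/
def ιP (T : TopCat.{u}) (x : ↑T) : P T x ⟶ T := by
  refine ConcreteCategory.ofHom ⟨id, ?_⟩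
  refine continuous_def.2 ?_
  intro U hU
  exact fun hx => hU.mem_nhds hx

/-- the identity as a map from the discrete space to the filter space -/
def dP (T : TopCat.{u}) (x : ↑T) : disc ↑T ⟶ P T x := ConcreteCategory.ofHom ⟨id, continuous_bot⟩

/-- indicator of a non-distinguished point, into Sierpinski -/
def chiP (T : TopCat.{u}) (x : ↑T) (w : ↑T) (hw : w ≠ x) : P T x ⟶ sierp.{u} := by
  refine ConcreteCategory.ofHom ⟨fun a => if a = w then ULift.up true else ULift.up false, ?_⟩
  rw [continuous_def]
  intro U hU
  intro hx
  -- x is in the preimage; since x ≠ w, the value at x is `up false`, so `up false ∈ U`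
  have hfalse : ULift.up false ∈ U := by
    have : (if x = w then ULift.up true else ULift.up false) ∈ U := hx
    rwa [if_neg (fun h => hw h.symm)] at this
  have htrue : ULift.up true ∈ U := hU hfalse
  refine Filter.mem_of_superset Filter.univ_mem ?_
  intro a _
  show (if a = w then ULift.up true else ULift.up false) ∈ U
  by_cases h : a = w
  · rwa [if_pos h]
  · rwa [if_neg h]

lemma theta_P_inj (T : TopCat.{u}) (x : ↑T) : Function.Injective (θ F (P T x)) := by
  apply theta_inj_of_sep
  intro y z hyz
  by_cases hy : y = x
  · -- then z ≠ x
    have hz : z ≠ x := fun h => hyz (h ▸ hy)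
    refine ⟨sierp, chiP T x z hz, theta_sierp_inj F, ?_⟩
    show (if y = z then ULift.up.{u} true else ULift.up false) ≠ (if z = z then ULift.up true else ULift.up false)
    rw [if_neg hyz, if_pos rfl]
    exact fun h => Bool.false_ne_true (congrArg ULift.down h)
  · refine ⟨sierp, chiP T x y hy, theta_sierp_inj F, ?_⟩
    show (if y = y then ULift.up.{u} true else ULift.up false) ≠ (if z = y then ULift.up true else ULift.up false)
    rw [if_pos rfl, if_neg (fun h => hyz h.symm)]
    exact fun h => Bool.false_ne_true (congrArg ULift.down h).symm

lemma theta_P_bij (T : TopCat.{u}) (x : ↑T) : Function.Bijective (θ F (P T x)) :=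
  ⟨theta_P_inj F T x, theta_surj F (P T x)⟩

/-! ### Every space is a wide pushout of filter spaces over its discretization -/

def dT (T : TopCat.{u}) : disc ↑T ⟶ T := ConcreteCategory.ofHom ⟨id, continuous_bot⟩

def wideDiag (T : TopCat.{u}) : WidePushoutShape ↑T ⥤ TopCat.{u} :=
  WidePushoutShape.wideSpan (disc ↑T) (fun x => P T x) (fun x => dP T x)

def wideCocone (T : TopCat.{u}) : Cocone (wideDiag T) :=
  WidePushoutShape.mkCocone (dT T) (fun x => ιP T x) (fun x => by ext a; rfl)

lemma wide_leg_eq (T : TopCat.{u}) (s : Cocone (wideDiag T)) (w : ↑T) (a : ↑T) :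
    s.ι.app (some w) a = s.ι.app none a :=
  ConcreteCategory.congr_hom (s.w (WidePushoutShape.Hom.init w)) a

def wideIsColimit (T : TopCat.{u}) : IsColimit (wideCocone T) := by
  refine { desc := fun s => TopCat.ofHom ⟨fun a => s.ι.app none a, ?_⟩
           fac := fun s j => ?_
           uniq := fun s m hm => ?_ }
  · rw [continuous_def]
    intro V hV
    rw [isOpen_iff_mem_nhds]
    intro w hw
    have hcont := (s.ι.app (some w)).hom.continuous
    have hopen := hcont.isOpen_preimage V hV
    have hpre : (s.ι.app (some w)) ⁻¹' V = (fun a => s.ι.app none a) ⁻¹' V := by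
      ext a
      exact iff_of_eq (congrArg (· ∈ V) (wide_leg_eq T s w a))
    rw [hpre] at hopen
    exact hopen hw
  · rcases j with _ | x
    · ext a; rfl
    · ext a
      exact (wide_leg_eq T s x a).symm
  · ext a
    exact ConcreteCategory.congr_hom (hm none) a

lemma theta_T_inj (T : TopCat.{u}) : Function.Injective (θ F T) := by
  have hc : IsColimit (F.mapCocone (wideCocone T)) :=
    isColimitOfPreserves F (wideIsColimit T)
  let e0 : F.obj pt × ↑T ≃ F.obj (disc ↑T) :=
    Equiv.ofBijective _ (theta_disc_bij F ↑T)
  let eP : ∀ x : ↑T, F.obj pt × ↑T ≃ F.obj (P T x) := fun x =>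
    Equiv.ofBijective _ (theta_P_bij F T x)
  let c : Cocone (wideDiag T ⋙ F) :=
    { pt := F.obj pt × ↑T
      ι := { app := fun j =>
               match j with
               | none => TypeCat.ofHom fun a => e0.symm a
               | some x => TypeCat.ofHom fun a => (eP x).symm a
             naturality := by
               intro j j' f
               change WidePushoutShape.Hom j j' at f
               cases f with
               | id X =>
                   rw [WidePushoutShape.hom_id]
                   simp
               | init x =>
                   refine ConcreteCategory.hom_ext _ _ fun a => ?_
                   obtain ⟨⟨s, w⟩, rfl⟩ := e0.surjective a
                   show (eP x).symm (F.map ((wideDiag T).map (WidePushoutShape.Hom.init x))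
                     (θ F (disc ↑T) (s, w))) = e0.symm (θ F (disc ↑T) (s, w))
                   have h1 : F.map ((wideDiag T).map (WidePushoutShape.Hom.init x))
                       (θ F (disc ↑T) (s, w)) = θ F (P T x) (s, w) :=
                     θ_nat F (dP T x) s w
                   have h2 : e0.symm (θ F (disc ↑T) (s, w)) = (s, w) := by
                     rw [Equiv.symm_apply_eq]; rfl
                   rw [h1, h2, Equiv.symm_apply_eq]
                   rfl } }
  have hdesc : ∀ s (y : ↑T), hc.desc c (θ F T (s, y)) = (s, y) := by
    intro s y
    have h1 : θ F T (s, y) = F.map (ιP T y) (θ F (P T y) (s, y)) :=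
      (θ_nat F (ιP T y) s y).symm
    rw [h1]
    have h3 : hc.desc c (F.map (ιP T y) (θ F (P T y) (s, y)))
        = (eP y).symm (θ F (P T y) (s, y)) :=
      types_congr_hom (hc.fac c (some y)) (θ F (P T y) (s, y))
    rw [h3, Equiv.symm_apply_eq]
    rfl
  intro p q hpq
  have h := congrArg (hc.desc c) hpq
  rw [show p = (p.1, p.2) from rfl, show q = (q.1, q.2) from rfl] at h ⊢
  rw [hdesc, hdesc] at h
  exact h

lemma theta_T_bij (T : TopCat.{u}) : Function.Bijective (θ F T) :=
  ⟨theta_T_inj F T, theta_surj F T⟩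

end

section
/-! ### `prodForget S` preserves colimits (it is a left adjoint) -/

def rAdj (S : Type u) : Type u ⥤ TopCat.{u} where
  obj Y := @TopCat.of (S → Y) ⊤
  map g := ConcreteCategory.ofHom (@ContinuousMap.mk _ _ ⊤ ⊤ (fun f => g ∘ f) continuous_top)
  map_id := by intros; rfl
  map_comp := by intros; rfl

def adjS (S : Type u) : prodForget.{u} S ⊣ rAdj S :=
  Adjunction.mkOfHomEquiv
  { homEquiv := fun T Y =>
      { toFun := fun φ => ConcreteCategory.ofHom (@ContinuousMap.mk _ _ _ ⊤ (fun t s => φ (s, t)) continuous_top)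
        invFun := fun ψ => TypeCat.ofHom fun p => ψ p.2 p.1
        left_inv := fun φ => rfl
        right_inv := fun ψ => ConcreteCategory.hom_ext _ _ fun t => rfl }
    homEquiv_naturality_left_symm := by intros; rfl
    homEquiv_naturality_right := by intros; rfl }

lemma prodForget_preserves (S : Type u) :
    PreservesColimitsOfSize.{u, u} (prodForget.{u} S) :=
  (adjS S).leftAdjoint_preservesColimits

theorem mem_iff (F : TopCat.{u} ⥤ Type u) :
    prodForgetFunctor.{u}.essImage F ↔
      Nonempty (PreservesColimitsOfSize.{u, u} F) := by
  constructor
  · rintro ⟨S, ⟨i⟩⟩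
    haveI : PreservesColimitsOfSize.{u, u} (prodForgetFunctor.{u}.obj S) :=
      prodForget_preserves S
    exact ⟨preservesColimits_of_natIso i⟩
  · rintro ⟨hF⟩
    haveI := hF
    refine ⟨F.obj pt, ⟨NatIso.ofComponents
      (fun T => (Equiv.ofBijective _ (theta_T_bij F T)).toIso) ?_⟩⟩
    intro T T' h
    refine ConcreteCategory.hom_ext _ _ fun p => ?_
    exact (θ_nat F h p.1 p.2).symm

theorem pf_full : prodForgetFunctor.{u}.Full := by
  constructor
  intro S S' η
  refine ⟨TypeCat.ofHom fun s => (η.app pt (s, PUnit.unit)).1, ?_⟩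
  apply NatTrans.ext
  funext T
  refine ConcreteCategory.hom_ext _ _ fun p => ?_
  exact (types_congr_hom (η.naturality (ptTo p.2)) (p.1, PUnit.unit)).symm

theorem pf_faithful : prodForgetFunctor.{u}.Faithful := by
  constructor
  intro S S' g g' h
  refine ConcreteCategory.hom_ext _ _ fun s => ?_
  exact congrArg (fun η => (η.app pt (s, PUnit.unit)).1) h

theorem equiv_nonempty :
    Nonempty ((ObjectProperty.FullSubcategory fun F : TopCat.{u} ⥤ Type u =>
      Nonempty (PreservesColimitsOfSize.{u, u} F)) ≌ Type u) := by
  haveI : prodForgetFunctor.{u}.Full := pf_full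
  haveI : prodForgetFunctor.{u}.Faithful := pf_faithful
  let Pr : ObjectProperty (TopCat.{u} ⥤ Type u) := fun F =>
    Nonempty (PreservesColimitsOfSize.{u, u} F)
  let L : Type u ⥤ ObjectProperty.FullSubcategory Pr :=
    ObjectProperty.lift Pr prodForgetFunctor (fun S => ⟨prodForget_preserves S⟩)
  haveI : L.Full := inferInstance
  haveI : L.Faithful := inferInstance
  haveI : L.EssSurj := by
    constructor
    intro G
    obtain ⟨S, ⟨i⟩⟩ := (mem_iff G.1).2 G.2
    exact ⟨S, ⟨Pr.ι.preimageIso i⟩⟩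
  haveI : L.IsEquivalence := {}
  exact ⟨L.asEquivalence.symm⟩

end
end Stmt7


theorem stmt7 :
    prodForgetFunctor.{u}.Full ∧ prodForgetFunctor.{u}.Faithful ∧
      (∀ F : TopCat.{u} ⥤ Type u,
        prodForgetFunctor.{u}.essImage F ↔
          Nonempty (PreservesColimitsOfSize.{u, u} F)) ∧
      Nonempty ((ObjectProperty.FullSubcategory fun F : TopCat.{u} ⥤ Type u =>
        Nonempty (PreservesColimitsOfSize.{u, u} F)) ≌ Type u) := by
  exact ⟨Stmt7.pf_full, Stmt7.pf_faithful, Stmt7.mem_iff, Stmt7.equiv_nonempty⟩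
end

section
/- Let F : TopCat ⥤ Type u be a functor preserving all small colimits, and let f : X ⟶ Y be a continuous map whose underlying function is bijective. Then F.map f is a bijection (an isomorphism in Type u). Consequently, the category of topological spaces cannot be recovered from its cocontinuous Set-valued functors: they are not jointly conservative. -/
/-!
STATEMENT 8: A small-colimit-preserving functor `F : TopCat ⥤ Type u` sends every
continuous map with bijective underlying function to a bijection.
-/

open CategoryTheory CategoryTheory.Limits Topology

universe u

namespace Stmt8Aux

variable {α : Type u} (σ τ : TopologicalSpace α)

/-- The carrier: a copy of `α` ("core points" `inl x`) together with satellite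
points `inr (y, v, k)` at levels `k : ℕ`. -/
abbrev CC (α : Type u) : Type u := α ⊕ (α × α × ℕ)

/-- The open sets of the `n`-th stage topology.  Satellites at level `≥ n` are isolated;
satellites at level `< n` are topologically indistinguishable twins of the core point
`inl v`.  A neighborhood of a core point `inl x` must contain a `σ`-neighborhood of the
core, and for each core point `y` of it, all satellites `(y, v, k)` for `v` in some
`τ`-neighborhood of `y` and all sufficiently large `k`. -/
def P (n : ℕ) (W : Set (CC α)) : Prop :=
  (∀ y v k, k < n → (Sum.inr (y, v, k) ∈ W ↔ Sum.inl v ∈ W)) ∧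
  ∀ x : α, Sum.inl x ∈ W →
    ∃ U : Set α, IsOpen[σ] U ∧ x ∈ U ∧ (∀ u ∈ U, Sum.inl u ∈ W) ∧
      ∃ m, n ≤ m ∧ ∀ y ∈ U, ∃ V : Set α, IsOpen[τ] V ∧ y ∈ V ∧
        ∀ v ∈ V, ∀ k, m ≤ k → Sum.inr (y, v, k) ∈ W

/-- The `n`-th stage topology. -/
def topo (n : ℕ) : TopologicalSpace (CC α) where
  IsOpen := P σ τ n
  isOpen_univ := by
    refine ⟨fun _ _ _ _ => by simp, fun x _ => ⟨Set.univ, σ.isOpen_univ, trivial,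
      fun _ _ => trivial, n, le_rfl, fun y _ => ⟨Set.univ, τ.isOpen_univ, trivial,
      fun _ _ _ _ => trivial⟩⟩⟩
  isOpen_inter := by
    rintro s t ⟨hs1, hs2⟩ ⟨ht1, ht2⟩
    refine ⟨fun y v k hk => ?_, fun x hx => ?_⟩
    · rw [Set.mem_inter_iff, Set.mem_inter_iff, hs1 y v k hk, ht1 y v k hk]
    · obtain ⟨U1, hU1, hxU1, hU1s, m1, hm1, hV1⟩ := hs2 x hx.1
      obtain ⟨U2, hU2, hxU2, hU2t, m2, hm2, hV2⟩ := ht2 x hx.2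
      refine ⟨U1 ∩ U2, σ.isOpen_inter _ _ hU1 hU2, ⟨hxU1, hxU2⟩,
        fun u hu => ⟨hU1s u hu.1, hU2t u hu.2⟩, max m1 m2, le_trans hm1 (le_max_left _ _),
        fun y hy => ?_⟩
      obtain ⟨V1, hV1o, hyV1, hsat1⟩ := hV1 y hy.1
      obtain ⟨V2, hV2o, hyV2, hsat2⟩ := hV2 y hy.2
      exact ⟨V1 ∩ V2, τ.isOpen_inter _ _ hV1o hV2o, ⟨hyV1, hyV2⟩, fun v hv k hk =>
        ⟨hsat1 v hv.1 k (le_trans (le_max_left _ _) hk),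
         hsat2 v hv.2 k (le_trans (le_max_right _ _) hk)⟩⟩
  isOpen_sUnion := by
    intro S hS
    refine ⟨fun y v k hk => ?_, fun x hx => ?_⟩
    · constructor
      · rintro ⟨W, hW, hmem⟩
        exact ⟨W, hW, ((hS W hW).1 y v k hk).mp hmem⟩
      · rintro ⟨W, hW, hmem⟩
        exact ⟨W, hW, ((hS W hW).1 y v k hk).mpr hmem⟩
    · obtain ⟨W, hWS, hxW⟩ := hx
      obtain ⟨U, hU, hxU, hUW, m, hm, hV⟩ := (hS W hWS).2 x hxW
      refine ⟨U, hU, hxU, fun u hu => ⟨W, hWS, hUW u hu⟩, m, hm, fun y hy => ?_⟩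
      obtain ⟨V, hVo, hyV, hsat⟩ := hV y hy
      exact ⟨V, hVo, hyV, fun v hv k hk => ⟨W, hWS, hsat v hv k hk⟩⟩

lemma topo_isOpen_iff (n : ℕ) (W : Set (CC α)) :
    IsOpen[topo σ τ n] W ↔ P σ τ n W := Iff.rfl

lemma topo_mono {n m : ℕ} (h : n ≤ m) : topo σ τ n ≤ topo σ τ m := by
  intro W hW
  obtain ⟨h1, h2⟩ := hW
  refine ⟨fun y v k hk => h1 y v k (lt_of_lt_of_le hk h), fun x hx => ?_⟩
  obtain ⟨U, hU, hxU, hUW, m', hm', hV⟩ := h2 x hx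
  exact ⟨U, hU, hxU, hUW, m', le_trans h hm', hV⟩


lemma isOpen_pointwise {β : Type u} (t : TopologicalSpace β) (s : Set β)
    (h : ∀ x ∈ s, ∃ U, IsOpen[t] U ∧ x ∈ U ∧ U ⊆ s) : IsOpen[t] s := by
  have hs : s = ⋃₀ {U : Set β | IsOpen[t] U ∧ U ⊆ s} := by
    apply Set.Subset.antisymm
    · intro x hx
      obtain ⟨U, hU, hxU, hUs⟩ := h x hx
      exact ⟨U, ⟨hU, hUs⟩, hxU⟩
    · rintro x ⟨U, ⟨-, hUs⟩, hxU⟩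
      exact hUs hxU
  rw [hs]
  exact t.isOpen_sUnion _ (fun U hU => hU.1)

/-- The stages as objects of `TopCat`. -/
def Q (n : ℕ) : TopCat.{u} := @TopCat.of (CC α) (topo σ τ n)

/-- The chain of stages; all transition maps are identity functions. -/
def DD : ℕ ⥤ TopCat.{u} where
  obj n := Q σ τ n
  map {n m} g := @TopCat.ofHom (CC α) (CC α) (topo σ τ n) (topo σ τ m)
    (@ContinuousMap.mk _ _ (topo σ τ n) (topo σ τ m) id
      (continuous_id_iff_le.mpr (topo_mono σ τ (leOfHom g))))
  map_id _ := rfl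
  map_comp _ _ := rfl

/-- The colimit topology. -/
def tinf : TopologicalSpace (CC α) := ⨆ n, topo σ τ n

/-- The colimit cocone. -/
def E : Cocone (DD σ τ) where
  pt := @TopCat.of (CC α) (tinf σ τ)
  ι :=
    { app := fun n => @TopCat.ofHom (CC α) (CC α) (topo σ τ n) (tinf σ τ)
        (@ContinuousMap.mk _ _ (topo σ τ n) (tinf σ τ) id
          (continuous_id_iff_le.mpr (le_iSup (fun k => topo σ τ k) n)))
      naturality := fun _ _ _ => rfl }

lemma app_const (c : Cocone (DD σ τ)) (n : ℕ) (z : CC α) :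
    c.ι.app n z = c.ι.app 0 z := by
  have h := c.ι.naturality (homOfLE (Nat.zero_le n))
  exact ConcreteCategory.congr_hom h z

/-- Our cocone is a colimit cocone. -/
def EIsColimit : IsColimit (E σ τ) where
  desc c := @TopCat.ofHom (CC α) c.pt (tinf σ τ) c.pt.str <|
    @ContinuousMap.mk (CC α) c.pt (tinf σ τ) c.pt.str (fun z => c.ι.app 0 z) (by
    rw [continuous_def]
    intro s hs
    refine isOpen_iSup_iff.mpr fun n => ?_
    have hkey : (fun z : CC α => c.ι.app 0 z) ⁻¹' s = ⇑(c.ι.app n) ⁻¹' s := by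
      apply Set.ext
      intro z
      exact Iff.of_eq (congrArg (· ∈ s) (app_const σ τ c n z)).symm
    show IsOpen[topo σ τ n] ((fun z : CC α => c.ι.app 0 z) ⁻¹' s)
    rw [hkey]
    exact (c.ι.app n).hom.continuous.isOpen_preimage s hs)
  fac c n := by
    apply TopCat.hom_ext
    apply ContinuousMap.ext
    intro z
    exact (app_const σ τ c n z).symm
  uniq c m hm := by
    apply TopCat.hom_ext
    apply ContinuousMap.ext
    intro z
    exact ConcreteCategory.congr_hom (hm 0) z

/-- `X` as an object of `TopCat`. -/
def XX : TopCat.{u} := @TopCat.of α σ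

/-- `Y` as an object of `TopCat`. -/
def YY : TopCat.{u} := @TopCat.of α τ

/-- The continuous bijection `X ⟶ Y` (identity function). -/
def ff (hle : σ ≤ τ) : XX σ ⟶ YY τ :=
  @TopCat.ofHom α α σ τ (@ContinuousMap.mk _ _ σ τ id (continuous_id_iff_le.mpr hle))

/-- The inclusion of the core copy of `X` into stage `0`. -/
def iX : XX σ ⟶ (DD σ τ).obj 0 :=
  @TopCat.ofHom α (CC α) σ (topo σ τ 0) <| @ContinuousMap.mk _ _ σ (topo σ τ 0) Sum.inl (by
    rw [continuous_def]
    intro W hW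
    refine isOpen_pointwise σ _ fun x hx => ?_
    obtain ⟨U, hU, hxU, hUW, _⟩ := hW.2 x hx
    exact ⟨U, hU, hxU, fun u hu => hUW u hu⟩)

/-- The retraction from stage `n` onto `X`: live satellites (level `≥ n`) go to their
`y`-coordinate; collapsed satellites (twins, level `< n`) go to their `v`-coordinate. -/
def rr (n : ℕ) : (DD σ τ).obj n ⟶ XX σ :=
  @TopCat.ofHom (CC α) α (topo σ τ n) σ <| @ContinuousMap.mk _ _ (topo σ τ n) σ
    (Sum.elim id (fun p : α × α × ℕ => if p.2.2 < n then p.2.1 else p.1)) (by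
    rw [continuous_def]
    intro U hU
    refine ⟨fun y v k hk => ?_, fun x hx => ?_⟩
    · show (if k < n then v else y) ∈ U ↔ v ∈ U
      rw [if_pos hk]
    · refine ⟨U, hU, hx, fun u hu => hu, n, le_rfl, fun y hy =>
        ⟨Set.univ, τ.isOpen_univ, trivial, fun v _ k hk => ?_⟩⟩
      show (if k < n then v else y) ∈ U
      rw [if_neg (not_lt.mpr hk)]
      exact hy)

/-- The key map: `Y` maps continuously onto the core copy inside the colimit. -/
def ww : YY τ ⟶ (E σ τ).pt :=
  @TopCat.ofHom α (CC α) τ (tinf σ τ) <| @ContinuousMap.mk _ _ τ (tinf σ τ) Sum.inl (by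
    rw [continuous_def]
    intro W hW
    have hP : ∀ n, P σ τ n W := fun n => isOpen_iSup_iff.mp hW n
    refine isOpen_pointwise τ _ fun x hx => ?_
    obtain ⟨U, hU, hxU, hUW, m, hm, hV⟩ := (hP 0).2 x hx
    obtain ⟨V, hVo, hxV, hsat⟩ := hV x hxU
    refine ⟨V, hVo, hxV, fun v hv => ?_⟩
    have h1 : Sum.inr (x, v, m) ∈ W := hsat v hv m le_rfl
    exact ((hP (m + 1)).1 x v m (Nat.lt_succ_self m)).mp h1)

/-- Commutation: including `X` in stage 0 and passing to the colimit agrees with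
coarsening to `Y` and then mapping in. -/
lemma comm (hle : σ ≤ τ) : iX σ τ ≫ (E σ τ).ι.app 0 = ff σ τ hle ≫ ww σ τ := rfl

lemma retract (n : ℕ) :
    (iX σ τ ≫ (DD σ τ).map (homOfLE (Nat.zero_le n))) ≫ rr σ τ n = 𝟙 (XX σ) :=
  rfl

/-- The key injectivity lemma. -/
theorem key (F : TopCat.{u} ⥤ Type u) [PreservesColimitsOfSize.{u, u} F]
    (hle : σ ≤ τ) : Function.Injective (F.map (ff σ τ hle)) := by
  haveI : PreservesColimitsOfSize.{0, 0} F := preservesColimitsOfSize_shrink.{0, u, 0, u} F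
  intro a b hab
  have hE : IsColimit (F.mapCocone (E σ τ)) := isColimitOfPreserves F (EIsColimit σ τ)
  have h0 : (F.mapCocone (E σ τ)).ι.app 0 (F.map (iX σ τ) a)
      = (F.mapCocone (E σ τ)).ι.app 0 (F.map (iX σ τ) b) := by
    show F.map ((E σ τ).ι.app 0) (F.map (iX σ τ) a)
      = F.map ((E σ τ).ι.app 0) (F.map (iX σ τ) b)
    rw [← FunctorToTypes.map_comp_apply, ← FunctorToTypes.map_comp_apply, comm σ τ hle,
      FunctorToTypes.map_comp_apply, FunctorToTypes.map_comp_apply, hab]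
  rw [Types.FilteredColimit.isColimit_eq_iff _ hE] at h0
  obtain ⟨k, g1, g2, hk⟩ := h0
  have hg : g1 = g2 := Subsingleton.elim _ _
  rw [hg] at hk
  have hg2 : g2 = homOfLE (Nat.zero_le k) := Subsingleton.elim _ _
  rw [hg2] at hk
  have hk' : F.map (iX σ τ ≫ (DD σ τ).map (homOfLE (Nat.zero_le k))) a
      = F.map (iX σ τ ≫ (DD σ τ).map (homOfLE (Nat.zero_le k))) b := by
    rw [FunctorToTypes.map_comp_apply, FunctorToTypes.map_comp_apply]
    exact hk
  have hfin := congrArg (F.map (rr σ τ k)) hk'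
  rw [← FunctorToTypes.map_comp_apply, ← FunctorToTypes.map_comp_apply,
    retract σ τ k, FunctorToTypes.map_id_apply, FunctorToTypes.map_id_apply] at hfin
  exact hfin

end Stmt8Aux

theorem stmt8 (F : TopCat.{u} ⥤ Type u) [PreservesColimitsOfSize.{u, u} F]
    {X Y : TopCat.{u}} (f : X ⟶ Y) (hf : Function.Bijective f) :
    Function.Bijective (F.map f) := by
  constructor
  · -- injectivity
    have hle : X.str ≤ TopologicalSpace.induced (⇑f) Y.str :=
      continuous_iff_le_induced.mp f.hom.continuous
    let Wo : TopCat.{u} := Stmt8Aux.YY (TopologicalSpace.induced (⇑f) Y.str)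
    let eqv : ↥Wo ≃ ↥Y := Equiv.ofBijective (⇑f) hf
    have hcont1 : Continuous (⇑eqv : ↥Wo → ↥Y) := by
      show @Continuous ↥Wo ↥Y (TopologicalSpace.induced (⇑f) Y.str) Y.str ⇑eqv
      exact continuous_induced_dom
    have hcont2 : Continuous (⇑eqv.symm : ↥Y → ↥Wo) := by
      show @Continuous ↥Y ↥Wo Y.str (TopologicalSpace.induced (⇑f) Y.str) ⇑eqv.symm
      refine continuous_induced_rng.mpr ?_
      have hh : ⇑f ∘ ⇑eqv.symm = id := eqv.self_comp_symm
      exact (congrArg (fun g : ↥Y → ↥Y => Continuous g) hh).mpr continuous_id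
    let homeo : ↥Wo ≃ₜ ↥Y :=
      { eqv with continuous_toFun := hcont1, continuous_invFun := hcont2 }
    let e : Wo ≅ Y := TopCat.isoOfHomeo homeo
    have hcomp : f = @CategoryStruct.comp TopCat.{u} _ X Wo Y
        (@id (X ⟶ Wo) (Stmt8Aux.ff X.str (TopologicalSpace.induced (⇑f) Y.str) hle)) e.hom := rfl
    rw [hcomp, F.map_comp, types_comp]
    exact Function.Injective.comp
      (((isIso_iff_bijective (F.map e.hom)).mp inferInstance).injective)
      (Stmt8Aux.key X.str (TopologicalSpace.induced (⇑f) Y.str) F hle)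
  · -- surjectivity
    haveI : Epi f := (TopCat.epi_iff_surjective f).mpr hf.surjective
    haveI : PreservesColimitsOfSize.{0, 0} F := preservesColimitsOfSize_shrink.{0, u, 0, u} F
    haveI : Epi (F.map f) := preserves_epi_of_preservesColimit F f
    exact (epi_iff_surjective (F.map f)).mp inferInstance
end

section
/- Let F : Type u ⥤ TopCat be a functor preserving all small limits such that the composite of F with the forgetful functor TopCat ⥤ Type u is naturally isomorphic to the identity functor of Type u. Then F is naturally isomorphic to the functor equipping each set with the indiscrete (trivial) topology; equivalently, for every set X the space F(X) carries the indiscrete topology. -/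
/-!
STATEMENT 9: If `F : Type u ⥤ TopCat` preserves all small limits and its composite with
the forgetful functor is naturally isomorphic to the identity, then `F` is naturally
isomorphic to the indiscrete-topology functor; equivalently every `F(X)` carries the
indiscrete topology `⊤`.
-/

open Topology CategoryTheory CategoryTheory.Limits

universe u

theorem stmt9 (F : Type u ⥤ TopCat.{u}) [PreservesLimitsOfSize.{u, u} F]
    (e : F ⋙ forget TopCat ≅ 𝟭 (Type u)) :
    Nonempty (F ≅ TopCat.trivial.{u}) ∧
      ∀ X : Type u, (F.obj X).str = (⊤ : TopologicalSpace (F.obj X)) := by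
  -- pointwise naturality of `e`
  have nat : ∀ {X Y : Type u} (f : X → Y) (a : F.obj X),
      e.hom.app Y ((F.map (TypeCat.ofHom f)) a) = f (e.hom.app X a) := fun {X Y} f a => by
    have h := e.hom.naturality (TypeCat.ofHom f)
    exact ConcreteCategory.congr_hom h a
  have hfb : ∀ (X : Type u) (a : F.obj X),
      e.inv.app X (e.hom.app X a) = a := fun X a =>
    ConcreteCategory.congr_hom (e.hom_inv_id_app X) a
  have hbf : ∀ (X : Type u) (x : X), e.hom.app X (e.inv.app X x) = x := fun X x =>
    ConcreteCategory.congr_hom (e.inv_hom_id_app X) x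
  have hinjE : ∀ (Y : Type u), Function.Injective (e.hom.app Y) := by
    intro Y u v h
    have := congrArg (e.inv.app Y) h
    rwa [hfb, hfb] at this
  -- every function between carriers of `F` is continuous
  have key : ∀ {X Y : Type u} (h : F.obj X → F.obj Y),
      Continuous h := by
    intro X Y h
    have hh : h = ⇑(F.map (TypeCat.ofHom fun x : X => e.hom.app Y (h (e.inv.app X x)))) := by
      funext a
      have h2 := nat (fun x : X => e.hom.app Y (h (e.inv.app X x))) a
      rw [hfb X a] at h2
      exact (hinjE Y h2).symm
    rw [hh]
    exact (F.map _).hom.continuous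
  -- a carrier with a nonempty proper open set is discrete
  have disc : ∀ (X : Type u) (U : Set (F.obj X)) (u0 u1 : F.obj X),
      IsOpen U → u0 ∈ U → u1 ∉ U → (F.obj X).str = ⊥ := by
    intro X U u0 u1 hU h0 h1
    classical
    apply eq_bot_of_singletons_open
    intro a
    have hset : ({a} : Set (F.obj X)) = (fun b => if b = a then u0 else u1) ⁻¹' U := by
      ext b
      by_cases hb : b = a <;> simp [hb, h0, h1]
    rw [hset]
    exact (key _).isOpen_preimage U hU
  -- if a topology is not `⊤`, it has a nonempty proper open set
  have exU : ∀ (Z : Type u), (F.obj Z).str ≠ ⊤ →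
      ∃ U : Set (F.obj Z), IsOpen U ∧ U ≠ ∅ ∧ U ≠ Set.univ := by
    intro Z hZ
    by_contra h
    push_neg at h
    apply hZ
    apply top_unique
    intro U hU
    rw [TopologicalSpace.isOpen_top_iff]
    rcases eq_or_ne U ∅ with h' | h'
    · exact Or.inl h'
    · exact Or.inr (h U hU (Set.nonempty_iff_ne_empty.mpr h'))
  -- the main claim
  have htop : ∀ X : Type u, (F.obj X).str = (⊤ : TopologicalSpace (F.obj X)) := by
    intro X
    by_contra hX
    obtain ⟨U, hU, hne, hnu⟩ := exU X hX
    obtain ⟨u0, h0⟩ := Set.nonempty_iff_ne_empty.mpr hne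
    obtain ⟨u1, h1⟩ := (Set.ne_univ_iff_exists_notMem U).mp hnu
    have hne01 : u0 ≠ u1 := fun h => h1 (h ▸ h0)
    have hbot : (F.obj X).str = ⊥ := disc X U u0 u1 hU h0 h1
    haveI hdX : DiscreteTopology (F.obj X) := ⟨hbot⟩
    -- the infinite product
    set ι := ULift.{u} ℕ with hι
    set P : Type u := ι → X with hPdef
    let lc := Types.productLimitCone.{u, u} (fun _ : ι => X)
    have hlim : IsLimit (F.mapCone lc.cone) := isLimitOfPreserves F lc.isLimit
    let Q : TopCat.{u} := TopCat.of (ι → F.obj X)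
    let d : Cone (Discrete.functor (fun _ : ι => X) ⋙ F) :=
      { pt := Q
        π := Discrete.natTrans fun i =>
          (TopCat.ofHom (ContinuousMap.mk (fun q : ι → F.obj X => q i.as)
            (continuous_apply i.as)) : Q ⟶ F.obj X) }
    let ℓ : Q ⟶ (F.mapCone lc.cone).pt := hlim.lift d
    have fac : ∀ (i : ι) (q : Q),
        (F.map (TypeCat.ofHom fun p : P => p i)) (ℓ q) = q i := by
      intro i q
      exact ConcreteCategory.congr_hom (hlim.fac d ⟨i⟩) q
    have hinj : Function.Injective ℓ := by
      intro q1 q2 h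
      funext i
      rw [← fac i q1, ← fac i q2, h]
    let q0 : ι → F.obj X := fun _ => u0
    let q1 : ι → F.obj X := fun _ => u1
    by_cases hP : (F.obj P).str = ⊤
    · -- indiscrete product: the projection to a discrete space is continuous, contradiction
      have hV : IsOpen[(F.obj P).str]
          ((F.map (TypeCat.ofHom fun p : P => p (ULift.up 0))) ⁻¹' {u0}) :=
        (F.map (TypeCat.ofHom fun p : P => p (ULift.up 0))).hom.continuous.isOpen_preimage _ (isOpen_discrete _)
      rw [hP, TopologicalSpace.isOpen_top_iff] at hV
      rcases hV with hV | hV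
      · have hm : ℓ q0 ∈ (F.map (TypeCat.ofHom fun p : P => p (ULift.up 0))) ⁻¹' {u0} := by
          have := fac (ULift.up 0) q0
          simp only [Set.mem_preimage, Set.mem_singleton_iff]
          exact this
        rw [hV] at hm
        exact hm
      · have hm : ℓ q1 ∈ (F.map (TypeCat.ofHom fun p : P => p (ULift.up 0))) ⁻¹' {u0} :=
          hV ▸ Set.mem_univ _
        have h1' : (F.map (TypeCat.ofHom fun p : P => p (ULift.up 0))) (ℓ q1) = u0 := hm
        rw [fac (ULift.up 0) q1] at h1'
        exact hne01 h1'.symm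
    · -- discrete product: a singleton is open in the pi topology, contradiction
      obtain ⟨V, hV, hVne, hVnu⟩ := exU P hP
      obtain ⟨v0, hv0⟩ := Set.nonempty_iff_ne_empty.mpr hVne
      obtain ⟨v1, hv1⟩ := (Set.ne_univ_iff_exists_notMem V).mp hVnu
      have hPbot : (F.obj P).str = ⊥ := disc P V v0 v1 hV hv0 hv1
      haveI : DiscreteTopology ((F.mapCone lc.cone).pt : TopCat) := ⟨hPbot⟩
      have hopen : IsOpen (ℓ ⁻¹' {ℓ q0}) :=
        ℓ.hom.continuous.isOpen_preimage _ (isOpen_discrete _)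
      have hpre : ℓ ⁻¹' {ℓ q0} = {q0} := by
        ext q
        simp only [Set.mem_preimage, Set.mem_singleton_iff]
        exact hinj.eq_iff
      rw [hpre] at hopen
      rw [isOpen_pi_iff] at hopen
      obtain ⟨I, us, hus, hsub⟩ := hopen q0 rfl
      obtain ⟨n, hn⟩ := Infinite.exists_notMem_finset I
      have hmem : Function.update q0 n u1 ∈ (I : Set ι).pi us := by
        intro i hi
        have hne' : i ≠ n := fun h => hn (h ▸ hi)
        rw [Function.update_of_ne hne']
        exact (hus i hi).2
      have := hsub hmem
      have : Function.update q0 n u1 n = q0 n := by rw [this]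
      rw [Function.update_self] at this
      exact hne01 this.symm
  refine ⟨⟨NatIso.ofComponents (fun X => ?_) (fun {X Y} f => ?_)⟩, htop⟩
  · exact
      { hom := (@TopCat.ofHom (F.obj X) X _ ⊤ (@ContinuousMap.mk _ _ _ ⊤ (e.hom.app X) continuous_top) :
          F.obj X ⟶ TopCat.trivial.obj X)
        inv := (@TopCat.ofHom X (F.obj X) ⊤ _ (@ContinuousMap.mk _ _ ⊤ _ (e.inv.app X)
          (by
            have : @Continuous X (F.obj X) ⊤ ((F.obj X).str) (e.inv.app X) := by
              rw [htop X]; exact continuous_top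
            exact this)) : TopCat.trivial.obj X ⟶ F.obj X)
        hom_inv_id := by
          ext a
          exact hfb X a
        inv_hom_id := by
          ext x
          exact hbf X x }
  · ext a
    exact nat f a
end

section
/- Let P and Q be directed sets, let h : Q → P be a function, and consider the induced map Option.map h : Option Q → Option P, where Option Q and Option P carry the topologies in which a subset U is open if and only if, whenever none ∈ U, there exists p with some q ∈ U for all q ≥ p. Then Option.map h is continuous if and only if h is cofinal, i.e., Tendsto h atTop atTop (for every p ∈ P there exists q₀ ∈ Q with h q ≥ p for all q ≥ q₀). -/
/-!
STATEMENT 12: For directed sets `P`, `Q` and a function `h : Q → P`, the induced map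
`Option.map h : Option Q → Option P` between the spaces `Q ∪ {∞}` and `P ∪ {∞}` is
continuous iff `h` is cofinal, i.e. `Tendsto h atTop atTop`.
-/

open Filter

universe u v

/-- The space `P ∪ {∞}` associated to a directed set `P`. -/
def optionTopology (P : Type u) [Preorder P] [Nonempty P] [IsDirected P (· ≤ ·)] :
    TopologicalSpace (Option P) where
  IsOpen U := none ∈ U → ∃ p : P, ∀ q : P, p ≤ q → some q ∈ U
  isOpen_univ _ := ⟨Classical.arbitrary P, fun _ _ => Set.mem_univ _⟩
  isOpen_inter U V hU hV h := by
    obtain ⟨p, hp⟩ := hU h.1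
    obtain ⟨p', hp'⟩ := hV h.2
    obtain ⟨r, hr, hr'⟩ := directed_of (· ≤ ·) p p'
    exact ⟨r, fun q hq => ⟨hp q (hr.trans hq), hp' q (hr'.trans hq)⟩⟩
  isOpen_sUnion S hS h := by
    obtain ⟨t, htS, ht⟩ := h
    obtain ⟨p, hp⟩ := hS t htS ht
    exact ⟨p, fun q hq => ⟨t, htS, hp q hq⟩⟩

theorem stmt12 {P : Type u} [Preorder P] [Nonempty P] [IsDirected P (· ≤ ·)]
    {Q : Type v} [Preorder Q] [Nonempty Q] [IsDirected Q (· ≤ ·)]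
    (h : Q → P) :
    @Continuous (Option Q) (Option P) (optionTopology Q) (optionTopology P)
        (Option.map h) ↔
      Tendsto h atTop atTop := by
  rw [continuous_def, tendsto_atTop_atTop]
  constructor
  · intro hc p
    have hopen : @IsOpen (Option P) (optionTopology P)
        (insert none {x | ∃ r, p ≤ r ∧ x = some r}) :=
      fun _ => ⟨p, fun q hq => Or.inr ⟨q, hq, rfl⟩⟩
    obtain ⟨q₀, hq₀⟩ := hc _ hopen (Set.mem_insert _ _)
    refine ⟨q₀, fun q hq => ?_⟩
    rcases hq₀ q hq with h1 | ⟨r, hr, hr'⟩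
    · exact absurd h1 (by simp)
    · obtain rfl : h q = r := Option.some.injEq .. ▸ hr'
      exact hr
  · intro ht U hU hn
    obtain ⟨p, hp⟩ := hU hn
    obtain ⟨q₀, hq₀⟩ := ht p
    exact ⟨q₀, fun q hq => hp _ (hq₀ q hq)⟩
end

section
/- Let X and Y be types and let φ : Set Y → Set X be a function that preserves arbitrary unions (φ(⋃ i, s i) = ⋃ i, φ(s i) for every family s indexed by any type) and complements (φ(sᶜ) = (φ s)ᶜ for every s : Set Y). Then there exists a unique function g : X → Y such that φ(s) = g ⁻¹' s for all s : Set Y. -/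
/-!
STATEMENT 14: A map `φ : Set Y → Set X` preserving arbitrary (indexed) unions and
complements is the preimage map of a unique function `g : X → Y`.
-/

universe u v

theorem stmt14 {X : Type u} {Y : Type v} (φ : Set Y → Set X)
    (hUnion : ∀ {ι : Type v} (s : ι → Set Y), φ (⋃ i, s i) = ⋃ i, φ (s i))
    (hCompl : ∀ s : Set Y, φ sᶜ = (φ s)ᶜ) :
    ∃! g : X → Y, ∀ s : Set Y, φ s = g ⁻¹' s := by
  -- φ ∅ = ∅
  have hempty : φ ∅ = ∅ := by
    have := hUnion (fun i : PEmpty.{v+1} => (∅ : Set Y))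
    simpa using this
  -- φ univ = univ
  have huniv : φ Set.univ = Set.univ := by
    have := hCompl (∅ : Set Y)
    simpa [hempty] using this
  -- binary union
  have hunion2 : ∀ s t : Set Y, φ (s ∪ t) = φ s ∪ φ t := by
    intro s t
    have h1 : s ∪ t = ⋃ b : ULift.{v} Bool, (if b.down then s else t) := by
      ext y; simp only [Set.mem_iUnion, Set.mem_union]
      constructor
      · rintro (h | h)
        · exact ⟨⟨true⟩, by simpa⟩
        · exact ⟨⟨false⟩, by simpa⟩
      · rintro ⟨⟨b⟩, h⟩; cases b <;> simp_all
    have h2 : φ s ∪ φ t = ⋃ b : ULift.{v} Bool, φ (if b.down then s else t) := by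
      ext x; simp only [Set.mem_iUnion, Set.mem_union]
      constructor
      · rintro (h | h)
        · exact ⟨⟨true⟩, by simpa⟩
        · exact ⟨⟨false⟩, by simpa⟩
      · rintro ⟨⟨b⟩, h⟩; cases b <;> simp_all
    rw [h1, hUnion, h2]
  -- monotonicity
  have hmono : ∀ s t : Set Y, s ⊆ t → φ s ⊆ φ t := by
    intro s t hst
    have : s ∪ t = t := Set.union_eq_self_of_subset_left hst
    have := hunion2 s t
    rw [Set.union_eq_self_of_subset_left hst] at this
    rw [this]; exact Set.subset_union_left
  -- φ over an arbitrary set as union of singletons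
  have hset : ∀ s : Set Y, φ s = ⋃ y : s, φ {y.1} := by
    intro s
    have : s = ⋃ y : s, ({y.1} : Set Y) := by
      ext z; simp
    conv_lhs => rw [this, hUnion]
  -- each x lies in a unique φ {y}
  have hex : ∀ x : X, ∃ y : Y, x ∈ φ {y} := by
    intro x
    have : x ∈ φ Set.univ := by rw [huniv]; trivial
    rw [hset Set.univ] at this
    rcases Set.mem_iUnion.1 this with ⟨y, hy⟩
    exact ⟨y.1, hy⟩
  have huniq : ∀ (x : X) (y y' : Y), x ∈ φ {y} → x ∈ φ {y'} → y = y' := by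
    intro x y y' hy hy'
    by_contra hne
    have hsub : ({y} : Set Y) ⊆ ({y'} : Set Y)ᶜ := by
      intro z hz; simp at hz ⊢; subst hz; exact hne
    have := hmono _ _ hsub hy
    rw [hCompl] at this
    exact this hy'
  choose g hg using hex
  refine ⟨g, ?_, ?_⟩
  · intro s
    ext x
    rw [hset s]
    simp only [Set.mem_iUnion, Set.mem_preimage]
    constructor
    · rintro ⟨⟨y, hy⟩, hx⟩
      have := huniq x _ _ (hg x) hx
      rwa [this]
    · intro hgx
      exact ⟨⟨g x, hgx⟩, hg x⟩
  · intro g' hg'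
    funext x
    have h1 := hg' {g x}
    have : x ∈ φ {g x} := hg x
    rw [h1] at this
    simpa using this
end

section
/- Let L be a locally small category with hom-sets in Type u, together with a distinguished object X, such that for every type I : Type u the I-fold power X^I of X exists in L and every object of L is isomorphic to such a power. Let Mod(L) be the full subcategory of the functor category L ⥤ Type u consisting of the functors preserving all small products. Then the evaluation functor U : Mod(L) → Type u, M ↦ M(X), has a left adjoint F, and F sends a type I to the representable functor Hom(X^I, −); that is, there are bijections Hom_{Mod(L)}(Hom(X^I, −), M) ≅ (I → M(X)) natural in I and M. -/
/-!
STATEMENT 15: For an infinitary Lawvere theory `(L, X)` (all set-indexed powers of `X`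
exist and every object is isomorphic to one), the evaluation functor
`Mod(L) ⥤ Type u`, `M ↦ M(X)`, on the category of small-product-preserving functors
`L ⥤ Type u` has a left adjoint sending a type `I` to the representable model
`Hom(X^I, −)`.
-/

open CategoryTheory CategoryTheory.Limits

universe u v

/-- The category of models of an infinitary Lawvere theory: the full subcategory of
`L ⥤ Type u` on the functors preserving all small products. -/
abbrev LawvereModel (L : Type v) [Category.{u} L] : Type (max v (u + 1)) :=
  ObjectProperty.FullSubcategory fun M : L ⥤ Type u =>
    ∀ I : Type u, Nonempty (PreservesLimitsOfShape (Discrete I) M)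

/-- Evaluation of models at the distinguished object `X`. -/
def evalModel (L : Type v) [Category.{u} L] (X : L) : LawvereModel L ⥤ Type u :=
  ObjectProperty.ι _ ⋙ (evaluation L (Type u)).obj X

/-- The representable model `Hom(X^I, −)`. -/
noncomputable def freeModel (L : Type v) [Category.{u} L] (X : L)
    (hpow : ∀ I : Type u, HasProduct fun _ : I => X) (I : Type u) :
    LawvereModel L :=
  haveI := hpow I
  ⟨coyoneda.obj (Opposite.op (∏ᶜ fun _ : I => X)), fun _ => ⟨inferInstance⟩⟩

theorem stmt15 {L : Type v} [Category.{u} L] (X : L)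
    (hpow : ∀ I : Type u, HasProduct fun _ : I => X)
    (hgen : ∀ A : L, ∃ I : Type u,
      letI := hpow I; Nonempty (A ≅ ∏ᶜ fun _ : I => X)) :
    ∃ F : Type u ⥤ LawvereModel L,
      Nonempty (F ⊣ evalModel L X) ∧
        ∀ I : Type u, Nonempty (F.obj I ≅ freeModel L X hpow I) := by
  -- The hom-set equivalence `(freeModel I ⟶ M) ≃ (I → M X)`.
  let e : ∀ (I : Type u) (M : LawvereModel L),
      (freeModel L X hpow I ⟶ M) ≃ (I ⟶ (evalModel L X).obj M) := fun I M =>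
    haveI := hpow I
    haveI : PreservesLimitsOfShape (Discrete I) M.obj := (M.property I).some
    ((ObjectProperty.fullyFaithfulι _).homEquiv.trans coyonedaEquiv).trans
      (((PreservesProduct.iso M.obj (fun _ : I => X)).toEquiv.trans
        (Types.productIso (fun _ : I => M.obj.obj X)).toEquiv).trans TypeCat.homEquiv.symm)
  have he : ∀ I (M M' : LawvereModel L) (g : M ⟶ M') (h : freeModel L X hpow I ⟶ M),
      e I M' (h ≫ g) = e I M h ≫ (evalModel L X).map g := by
    intro I M M' g h
    haveI := hpow I
    haveI : PreservesLimitsOfShape (Discrete I) M.obj := (M.property I).some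
    haveI : PreservesLimitsOfShape (Discrete I) M'.obj := (M'.property I).some
    have h1 : ∀ (N : L ⥤ Type u) [PreservesLimitsOfShape (Discrete I) N]
        (m : N.obj (∏ᶜ fun _ : I => X)) (i : I),
        (Types.productIso (fun _ : I => N.obj X)).hom
          ((PreservesProduct.iso N (fun _ : I => X)).hom m) i
          = N.map (Pi.π (fun _ : I => X) i) m := by
      intro N _ m i
      have := congrArg (fun f => f m) (piComparison_comp_π N (fun _ : I => X) i)
      simp [PreservesProduct.iso_hom]
      exact this
    apply TypeCat.homEquiv.injective
    funext i
    show (Types.productIso (fun _ : I => M'.obj.obj X)).hom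
        ((PreservesProduct.iso M'.obj (fun _ : I => X)).hom (coyonedaEquiv (h.hom ≫ g.hom))) i
        = g.hom.app X ((Types.productIso (fun _ : I => M.obj.obj X)).hom
          ((PreservesProduct.iso M.obj (fun _ : I => X)).hom (coyonedaEquiv h.hom)) i)
    erw [coyonedaEquiv_comp, h1 M'.obj, h1 M.obj]
    exact (congrArg (fun f => f (coyonedaEquiv h.hom)) (g.hom.naturality (Pi.π (fun _ : I => X) i))).symm
  refine ⟨Adjunction.leftAdjointOfEquiv e he, ⟨Adjunction.adjunctionOfEquivLeft e he⟩,
    fun I => ⟨Iso.refl _⟩⟩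
end

section
/- Let A and B be locally small categories. Assume that every functor from A to any locally small category preserving all small colimits has a right adjoint (A is strongly compact), and that every functor from B to any locally small category preserving all small limits has a left adjoint (B^op is strongly compact). Then passing to adjoints yields an equivalence between the full subcategory of A ⥤ B on the functors preserving all small colimits and the opposite of the full subcategory of B ⥤ A on the functors preserving all small limits. -/
/-!
STATEMENT 18: If `A` is strongly compact (every small-colimit-preserving functor out of
`A` has a right adjoint) and `Bᵒᵖ` is strongly compact (every small-limit-preserving
functor out of `B` has a left adjoint), then passing to adjoints yields an equivalence
between the category of small-colimit-preserving functors `A ⥤ B` and the opposite of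
the category of small-limit-preserving functors `B ⥤ A`.
-/

open CategoryTheory CategoryTheory.Limits

universe u v₁ v₂

namespace Stmt18Aux

variable {A : Type v₁} [Category.{u} A] {B : Type v₂} [Category.{u} B]

/-- The category of colimit-preserving functors. -/
abbrev C₁ (A : Type v₁) [Category.{u} A] (B : Type v₂) [Category.{u} B] :=
  ObjectProperty.FullSubcategory fun F : A ⥤ B => Nonempty (PreservesColimitsOfSize.{u, u} F)

/-- The category of limit-preserving functors. -/
abbrev C₂ (A : Type v₁) [Category.{u} A] (B : Type v₂) [Category.{u} B] :=
  ObjectProperty.FullSubcategory fun G : B ⥤ A => Nonempty (PreservesLimitsOfSize.{u, u} G)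

variable (hA : ∀ (C : Type v₂) [Category.{u} C] (F : A ⥤ C)
      [PreservesColimitsOfSize.{u, u} F], F.IsLeftAdjoint)

include hA

/-- Each object of `C₁` is a left adjoint. -/
lemma ila (X : C₁ A B) : X.obj.IsLeftAdjoint :=
  letI := X.property.some
  hA B X.obj

/-- A chosen right adjoint. -/
noncomputable def radj (X : C₁ A B) : B ⥤ A :=
  letI := ila hA X
  X.obj.rightAdjoint

/-- The adjunction. -/
noncomputable def adj (X : C₁ A B) : X.obj ⊣ radj hA X :=
  letI := ila hA X
  Adjunction.ofIsLeftAdjoint X.obj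

/-- The right-adjoint functor between the subcategories. -/
noncomputable def Φ : C₁ A B ⥤ (C₂ A B)ᵒᵖ where
  obj X := Opposite.op ⟨radj hA X, ⟨(adj hA X).rightAdjoint_preservesLimits⟩⟩
  map {X Y} η := (ObjectProperty.homMk (conjugateEquiv (adj hA Y) (adj hA X) η.hom)).op
  map_id X := by
    dsimp
    rw [conjugateEquiv_id]
    rfl
  map_comp {X Y Z} η θ :=
    Quiver.Hom.unop_inj
      (ObjectProperty.hom_ext _ (by exact (conjugateEquiv_comp (adj hA Z) (adj hA Y) (adj hA X) θ.hom η.hom).symm))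

instance : (Φ (A := A) (B := B) hA).Faithful where
  map_injective {X Y} f g h := by
    have := congrArg Quiver.Hom.unop h
    exact ObjectProperty.hom_ext _ ((conjugateEquiv (adj hA Y) (adj hA X)).injective (by have h2 := congrArg InducedCategory.Hom.hom this; exact h2))

instance : (Φ (A := A) (B := B) hA).Full where
  map_surjective {X Y} φ :=
    ⟨ObjectProperty.homMk ((conjugateEquiv (adj hA Y) (adj hA X)).symm φ.unop.hom), by
      dsimp [Φ]; rw [Equiv.apply_symm_apply]; rfl⟩

end Stmt18Aux

open Stmt18Aux in
theorem stmt18 {A : Type v₁} [Category.{u} A] {B : Type v₂} [Category.{u} B]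
    (hA : ∀ (C : Type v₂) [Category.{u} C] (F : A ⥤ C)
      [PreservesColimitsOfSize.{u, u} F], F.IsLeftAdjoint)
    (hB : ∀ (C : Type v₁) [Category.{u} C] (G : B ⥤ C)
      [PreservesLimitsOfSize.{u, u} G], G.IsRightAdjoint) :
    Nonempty ((ObjectProperty.FullSubcategory fun F : A ⥤ B =>
        Nonempty (PreservesColimitsOfSize.{u, u} F)) ≌
      (ObjectProperty.FullSubcategory fun G : B ⥤ A =>
        Nonempty (PreservesLimitsOfSize.{u, u} G))ᵒᵖ) := by
  have : (Φ (A := A) (B := B) hA).EssSurj := by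
    constructor
    intro Z
    letI := Z.unop.property.some
    letI : Z.unop.obj.IsRightAdjoint := hB A Z.unop.obj
    let adjL : Z.unop.obj.leftAdjoint ⊣ Z.unop.obj := Adjunction.ofIsRightAdjoint Z.unop.obj
    let X : C₁ A B := ⟨Z.unop.obj.leftAdjoint, ⟨adjL.leftAdjoint_preservesColimits⟩⟩
    refine ⟨X, ⟨?_⟩⟩
    have e : radj hA X ≅ Z.unop.obj := Adjunction.rightAdjointUniq (adj hA X) adjL
    exact ((ObjectProperty.ι _).preimageIso
      (show (ObjectProperty.ι _).obj (Opposite.unop ((Φ hA).obj X)) ≅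
        (ObjectProperty.ι _).obj Z.unop from e)).op.symm
  have : (Φ (A := A) (B := B) hA).IsEquivalence := { }
  exact ⟨(Φ hA).asEquivalence⟩
end
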